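/- arXiv:1708.09109 — 6 statements merged into one kernel-verified Lean document; each statement's English description precedes it below -/
import Mathlib

section
/- Let 0 < q < 1, let n ≥ 2 and k ≥ 0 be integers, and let f(x_1,…,x_{n−1}) be a polynomial that is homogeneous of degree d, i.e., f(t x_1,…,t x_{n−1}) = t^d f(x_1,…,x_{n−1}). Then ∫_{0≤x_1≤⋯≤x_n≤1} f(x_1,…,x_{n−1}) x_n^k d_q x_1 ⋯ d_q x_n = ((1−q)/(1 − q^{n+k+d})) · ∫_{0≤x_1≤⋯≤x_{n−1}≤1} f(x_1,…,x_{n−1}) d_q x_1 ⋯ d_q x_{n−1}. -/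
/-- The `q`-integral over the simplex `0 ≤ x_1 ≤ ⋯ ≤ x_n ≤ 1`:
`∫ f d_q x = (1-q)^n ∑_{μ ∈ Par_n} q^{|μ|} f(q^{μ_1},…,q^{μ_n})`,
the sum over all partitions `μ` with at most `n` parts. -/
noncomputable def qint (q : ℝ) (n : ℕ) (f : (Fin n → ℝ) → ℝ) : ℝ :=
  (1 - q) ^ n *
    ∑' μ : {μ : Fin n → ℕ // Antitone μ}, q ^ (∑ i, μ.1 i) * f (fun i => q ^ (μ.1 i))

/-- The alternant `a_λ(x_1,…,x_n) = det(x_i^{λ_j})`. -/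
noncomputable def alt (n : ℕ) (lam : Fin n → ℕ) (x : Fin n → ℝ) : ℝ :=
  Matrix.det (Matrix.of fun i j : Fin n => x i ^ lam j)

/-- `λ + δ_n`, where `δ_n = (n-1, n-2, …, 1, 0)` is the staircase. -/
def stair (n : ℕ) (lam : Fin n → ℕ) : Fin n → ℕ :=
  fun j => lam j + (n - 1 - (j : ℕ))

/-- q-Pochhammer symbol `(a;q)_m = ∏_{i=0}^{m-1} (1 - a q^i)`. -/
noncomputable def qpoch (a q : ℝ) (m : ℕ) : ℝ :=
  ∏ i ∈ Finset.range m, (1 - a * q ^ i)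

/-- Parts of a partition `μ ∈ Par_n`, extended by `0` beyond index `n`
(`padF μ t` is the part `μ_{t+1}` in 1-based labelling). -/
def padF {n : ℕ} (μ : Fin n → ℕ) : ℕ → ℕ := fun t => if h : t < n then μ ⟨t, h⟩ else 0


open Finset

lemma summable_pi_geom {q : ℝ} (hq0 : 0 ≤ q) (hq1 : q < 1) :
    ∀ m : ℕ, Summable (fun ν : Fin m → ℕ => q ^ ∑ i, ν i) := by
  intro m
  induction m with
  | zero => exact Summable.of_finite
  | succ m ih =>
      have h := ((summable_geometric_of_lt_one hq0 hq1).mul_of_nonneg ih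
        (fun c => pow_nonneg hq0 _) (fun ν => pow_nonneg hq0 _))
      have := h.comp_injective (Fin.consEquiv (fun _ : Fin (m+1) => ℕ)).symm.injective
      refine this.congr fun ν => ?_
      simp only [Function.comp, Fin.consEquiv_symm_apply, Fin.sum_univ_succ, pow_add,
        Fin.tail]

lemma eval_abs_le {m : ℕ} (f : MvPolynomial (Fin m) ℝ) {x : Fin m → ℝ}
    (hx0 : ∀ i, 0 ≤ x i) (hx : ∀ i, x i ≤ 1) :
    |MvPolynomial.eval x f| ≤ ∑ d ∈ f.support, |MvPolynomial.coeff d f| := by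
  rw [MvPolynomial.eval_eq]
  refine (Finset.abs_sum_le_sum_abs _ _).trans (Finset.sum_le_sum fun d _ => ?_)
  rw [abs_mul]
  have h1 : |∏ i ∈ d.support, x i ^ d i| ≤ 1 := by
    rw [abs_of_nonneg (Finset.prod_nonneg fun i _ => pow_nonneg (hx0 i) _)]
    exact Finset.prod_le_one (fun i _ => pow_nonneg (hx0 i) _)
      (fun i _ => pow_le_one₀ (hx0 i) (hx i))
  calc |MvPolynomial.coeff d f| * |∏ i ∈ d.support, x i ^ d i|
      ≤ |MvPolynomial.coeff d f| * 1 := mul_le_mul_of_nonneg_left h1 (abs_nonneg _)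
    _ = _ := mul_one _

def parEquiv (m : ℕ) :
    ℕ × {ν : Fin (m+1) → ℕ // Antitone ν} ≃ {μ : Fin (m+2) → ℕ // Antitone μ} where
  toFun p := ⟨fun i => (if h : (i:ℕ) < m+1 then p.2.1 ⟨i, h⟩ else 0) + p.1, by
    intro i j hij
    have hij' : (i:ℕ) ≤ (j:ℕ) := hij
    apply Nat.add_le_add_right
    by_cases hj : (j:ℕ) < m+1
    · have hi : (i:ℕ) < m+1 := lt_of_le_of_lt hij' hj
      rw [dif_pos hj, dif_pos hi]
      exact p.2.2 (show (⟨(i:ℕ), hi⟩ : Fin (m+1)) ≤ ⟨(j:ℕ), hj⟩ from hij')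
    · rw [dif_neg hj]; exact Nat.zero_le _⟩
  invFun μ := (μ.1 ⟨m+1, by omega⟩,
    ⟨fun i => μ.1 i.castSucc - μ.1 ⟨m+1, by omega⟩, by
      intro i j hij
      exact Nat.sub_le_sub_right (μ.2 (Fin.castSucc_le_castSucc_iff.mpr hij)) _⟩)
  left_inv p := by
    obtain ⟨c, ν, hν⟩ := p
    have hlast : ¬ ((m+1 : ℕ) < m+1) := lt_irrefl _
    refine Prod.ext ?_ ?_
    · simp [hlast]
    · apply Subtype.ext
      funext i
      have hi : ((i.castSucc : Fin (m+2)) : ℕ) < m + 1 := i.isLt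
      simp only [dif_pos hi, dif_neg hlast, Fin.coe_castSucc, zero_add,
        Nat.add_sub_cancel, Fin.eta]
      rw [dif_pos i.isLt]
  right_inv μ := by
    apply Subtype.ext
    funext i
    show (if h : (i:ℕ) < m+1 then μ.1 (Fin.castSucc ⟨(i:ℕ), h⟩) - μ.1 ⟨m+1, by omega⟩ else 0)
        + μ.1 ⟨m+1, by omega⟩ = μ.1 i
    by_cases hi : (i : ℕ) < m + 1
    · have h1 : (Fin.castSucc (⟨(i:ℕ), hi⟩ : Fin (m+1))) = i := by
        apply Fin.ext; rfl
      rw [dif_pos hi]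
      rw [h1]
      exact Nat.sub_add_cancel (μ.2 (show i ≤ ⟨m+1, by omega⟩ from by
        simp [Fin.le_def]; omega))
    · have h2 : i = ⟨m+1, by omega⟩ := by
        apply Fin.ext; have := i.isLt; simp; omega
      rw [dif_neg hi, h2, zero_add]

theorem stmt4 (q : ℝ) (hq0 : 0 < q) (hq1 : q < 1) (n k d : ℕ) (hn : 2 ≤ n)
    (f : MvPolynomial (Fin (n - 1)) ℝ)
    (hf : ∀ (t : ℝ) (x : Fin (n - 1) → ℝ),
      MvPolynomial.eval (fun i => t * x i) f = t ^ d * MvPolynomial.eval x f) :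
    qint q n (fun x =>
        MvPolynomial.eval (fun i : Fin (n - 1) => x (Fin.castLE (by omega) i)) f
          * x ⟨n - 1, by omega⟩ ^ k)
      = (1 - q) / (1 - q ^ (n + k + d))
          * qint q (n - 1) (fun x => MvPolynomial.eval x f) := by
  obtain ⟨m, rfl⟩ : ∃ m, n = m + 2 := ⟨n - 2, by omega⟩
  have hq0' : (0:ℝ) ≤ q := hq0.le
  set e := m + 2 + k + d with he
  have hqe1 : q ^ e < 1 := pow_lt_one₀ hq0' hq1 (by omega)
  have hqe0 : (0:ℝ) ≤ q ^ e := pow_nonneg hq0' e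
  -- the (n-1)-dimensional summand
  set B : {ν : Fin (m+1) → ℕ // Antitone ν} → ℝ :=
    fun ν => q ^ (∑ i, ν.1 i) * MvPolynomial.eval (fun i => q ^ (ν.1 i)) f with hB
  -- summability of B
  set C := ∑ d ∈ f.support, |MvPolynomial.coeff d f| with hC
  have hxq : ∀ (j : ℕ), 0 ≤ q ^ j ∧ q ^ j ≤ 1 :=
    fun j => ⟨pow_nonneg hq0' j, pow_le_one₀ hq0' hq1.le⟩
  have hBnorm : Summable fun ν : {ν : Fin (m+1) → ℕ // Antitone ν} => ‖B ν‖ := by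
    have hfull : Summable fun ν : Fin (m+1) → ℕ =>
        ‖q ^ (∑ i, ν i) * MvPolynomial.eval (fun i => q ^ (ν i)) f‖ := by
      refine Summable.of_nonneg_of_le (fun ν => norm_nonneg _) (fun ν => ?_)
        (((summable_pi_geom hq0' hq1 (m+1))).mul_left C)
      rw [Real.norm_eq_abs, abs_mul, abs_of_nonneg (pow_nonneg hq0' _), mul_comm]
      exact mul_le_mul_of_nonneg_right
        (eval_abs_le f (fun i => (hxq _).1) (fun i => (hxq _).2)) (pow_nonneg hq0' _)
    exact hfull.subtype _
  have hAnorm : Summable fun c : ℕ => ‖(q ^ e) ^ c‖ := by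
    refine (summable_geometric_of_lt_one hqe0 hqe1).congr fun c => ?_
    rw [Real.norm_eq_abs, abs_of_nonneg (pow_nonneg hqe0 _)]
  have hsum : Summable fun p : ℕ × {ν : Fin (m+1) → ℕ // Antitone ν} =>
      (q ^ e) ^ p.1 * B p.2 := (hAnorm.mul_norm hBnorm).of_norm
  -- rewrite the LHS tsum through the equivalence
  unfold qint
  rw [← (parEquiv m).tsum_eq]
  have hterm : ∀ p : ℕ × {ν : Fin (m+1) → ℕ // Antitone ν},
      q ^ (∑ i, ((parEquiv m) p).1 i) *
        (MvPolynomial.eval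
            (fun i : Fin (m + 2 - 1) => (fun j => q ^ (((parEquiv m) p).1 j))
              (Fin.castLE (by omega) i)) f
          * ((fun j => q ^ (((parEquiv m) p).1 j)) ⟨m + 2 - 1, by omega⟩) ^ k)
      = (q ^ e) ^ p.1 * B p.2 := by
    intro ⟨c, ν⟩
    have hlast : ¬ ((m+1 : ℕ) < m+1) := lt_irrefl _
    have hμ : ∀ i : Fin (m+2), ((parEquiv m) (c, ν)).1 i
        = (if h : (i:ℕ) < m+1 then ν.1 ⟨i, h⟩ else 0) + c := fun i => rfl
    have hsum2 : (∑ i, ((parEquiv m) (c, ν)).1 i) = (∑ i, ν.1 i) + (m+2) * c := by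
      simp only [hμ]
      rw [Finset.sum_add_distrib, Finset.sum_const, card_univ, Fintype.card_fin,
        smul_eq_mul]
      congr 1
      rw [Fin.sum_univ_castSucc]
      simp only [Fin.coe_castSucc, Fin.val_last, dif_neg hlast]
      rw [add_zero]
      refine Finset.sum_congr rfl fun i _ => ?_
      rw [dif_pos i.isLt, Fin.eta]
    have heval : (fun i : Fin (m + 2 - 1) =>
          (fun j => q ^ (((parEquiv m) (c, ν)).1 j)) (Fin.castLE (by omega) i))
        = fun i : Fin (m + 2 - 1) => q ^ c * q ^ (ν.1 i) := by
      funext i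
      simp only [hμ]
      rw [dif_pos (show ((Fin.castLE (by omega) i : Fin (m+2)) : ℕ) < m + 1 from i.isLt)]
      rw [pow_add, mul_comm]
      congr
    have hlastval : ((parEquiv m) (c, ν)).1 ⟨m + 2 - 1, by omega⟩ = c := by
      simp only [hμ]
      norm_num
    rw [hsum2, heval]
    dsimp only
    rw [hlastval, hf (q ^ c) (fun i : Fin (m + 2 - 1) => q ^ (ν.1 i))]
    rw [show (MvPolynomial.eval fun i : Fin (m + 2 - 1) => q ^ (ν.1 i)) f
        = (MvPolynomial.eval fun i : Fin (m+1) => q ^ (ν.1 i)) f from rfl]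
    rw [hB]
    rw [← pow_mul q c d, ← pow_mul q c k, ← pow_mul q e c, he,
      pow_add q (∑ i, ν.1 i) ((m+2)*c),
      show (m+2+k+d)*c = (m+2)*c + (c*k + c*d) from by ring, pow_add, pow_add]
    ring
  rw [tsum_congr hterm, Summable.tsum_prod hsum]
  have hinner : ∀ c : ℕ, ∑' ν : {ν : Fin (m+1) → ℕ // Antitone ν}, (q ^ e) ^ c * B ν
      = (q ^ e) ^ c * ∑' ν, B ν := fun c => tsum_mul_left
  rw [tsum_congr hinner, tsum_mul_right, tsum_geometric_of_lt_one hqe0 hqe1]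
  show _ = (1 - q) / (1 - q ^ e) * ((1 - q) ^ (m + 1) * ∑' ν, B ν)
  rw [div_eq_mul_inv]
  ring
end

section
/- Let a_1, …, a_n be pairwise distinct nonzero complex numbers. Then a_1 ⋯ a_n (1 − a_1 ⋯ a_n) = ∑_{ℓ=1}^n a_ℓ (1 − a_ℓ) ∏_{i=1, i≠ℓ}^n (1 − a_i a_ℓ)/(1 − a_ℓ/a_i). -/
open Polynomial Finset

lemma key_sum (s : Finset ℂ) (f : ℂ[X]) (hf : f.degree < s.card) :
    ∑ x ∈ s, f.eval x / ∏ y ∈ s.erase x, (x - y) = f.coeff (s.card - 1) := by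
  have hinj : Set.InjOn id (s : Set ℂ) := Function.injective_id.injOn
  conv_rhs => rw [Lagrange.eq_interpolate (v := id) hinj hf]
  rw [Lagrange.interpolate_apply, Polynomial.finset_sum_coeff]
  refine Finset.sum_congr rfl fun x hx => ?_
  have hq : (∏ y ∈ s.erase x, (X - C y)).Monic :=
    monic_prod_of_monic _ _ fun y _ => monic_X_sub_C y
  have hqd : (∏ y ∈ s.erase x, (X - C y)).natDegree = s.card - 1 := by
    rw [natDegree_prod_of_monic _ _ fun y _ => monic_X_sub_C y]
    simp [Finset.card_erase_of_mem hx]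
  have hb : Lagrange.basis s id x
      = C (∏ y ∈ s.erase x, (x - y)⁻¹) * ∏ y ∈ s.erase x, (X - C y) := by
    rw [Lagrange.basis, map_prod, ← Finset.prod_mul_distrib]
    rfl
  rw [hb, ← mul_assoc, ← C_mul, coeff_C_mul, ← hqd, hq.coeff_natDegree, mul_one,
    Finset.prod_inv_distrib, div_eq_mul_inv]
  simp

lemma core (n : ℕ) (a : Fin n → ℂ) (h0 : ∀ i, a i ≠ 0)
    (hd : ∀ i j, i ≠ j → a i ≠ a j) :
    ∑ ℓ : Fin n, (a ℓ - 1) * (∏ i ∈ univ.erase ℓ, (a i * a ℓ - 1))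
        / (∏ i ∈ univ.erase ℓ, (a ℓ - a i)) = (∏ i, a i) - 1 := by
  have ha : Function.Injective a := fun i j h => by
    by_contra hne; exact hd i j hne h
  set S : Finset ℂ := Finset.image a univ with hS
  have hcard : S.card = n := by
    rw [hS, Finset.card_image_of_injective _ ha, card_univ, Fintype.card_fin]
  have hE : ∀ ℓ : Fin n, ∏ y ∈ S.erase (a ℓ), (a ℓ - y)
      = ∏ i ∈ univ.erase ℓ, (a ℓ - a i) := by
    intro ℓ
    rw [hS, ← Finset.image_erase ha, Finset.prod_image (fun i _ j _ h => ha h)]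
  have hEne : ∀ ℓ : Fin n, (∏ i ∈ univ.erase ℓ, (a ℓ - a i)) ≠ 0 := by
    intro ℓ
    refine Finset.prod_ne_zero_iff.mpr fun i hi => ?_
    exact sub_ne_zero_of_ne (hd ℓ i (Ne.symm (Finset.mem_erase.mp hi).1))
  have hfne : ∀ i : Fin n, (C (a i) * X + C (-1) : ℂ[X]) ≠ 0 := fun i =>
    leadingCoeff_ne_zero.mp (by rw [leadingCoeff_linear (h0 i)]; exact h0 i)
  by_cases hA1 : ∀ i, a i ≠ -1
  · -- case A : no node equals -1
    set P : ℂ[X] := ∏ i : Fin n, (C (a i) * X + C (-1)) with hP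
    have hPeval : ∀ x : ℂ, P.eval x = ∏ i, (a i * x - 1) := by
      intro x
      rw [hP, eval_prod]
      exact Finset.prod_congr rfl fun i _ => by simp [sub_eq_add_neg]
    have hPd : P.natDegree = n := by
      rw [hP, natDegree_prod _ _ fun i _ => hfne i,
        Finset.sum_congr rfl fun i _ => natDegree_linear (h0 i)]
      simp
    have hPC : P.coeff n = ∏ i, a i := by
      have h2 : P.leadingCoeff = ∏ i, a i := by
        rw [hP, leadingCoeff_prod]
        exact Finset.prod_congr rfl fun i _ => leadingCoeff_linear (h0 i)
      rw [leadingCoeff, hPd] at h2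
      exact h2
    have hmem : (-1 : ℂ) ∉ S := by
      simp only [hS, Finset.mem_image, Finset.mem_univ, true_and, not_exists]
      exact fun i => hA1 i
    set T : Finset ℂ := insert (-1 : ℂ) S with hT
    have hTcard : T.card = n + 1 := by rw [hT, Finset.card_insert_of_notMem hmem, hcard]
    have hk := key_sum T P (by
      rw [hTcard]
      refine lt_of_le_of_lt Polynomial.degree_le_natDegree ?_
      rw [hPd]; exact_mod_cast Nat.lt_succ_self n)
    rw [hTcard, Nat.add_sub_cancel, hPC, hT, Finset.sum_insert hmem,
      Finset.erase_insert hmem] at hk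
    -- first term equals 1
    have h1 : P.eval (-1) / ∏ y ∈ S, (-1 - y) = 1 := by
      have : ∏ y ∈ S, ((-1 : ℂ) - y) = ∏ i, (a i * (-1) - 1) := by
        rw [hS, Finset.prod_image (fun i _ j _ h => ha h)]
        exact Finset.prod_congr rfl fun i _ => by ring
      rw [hPeval, this]
      refine div_self (Finset.prod_ne_zero_iff.mpr fun i _ => ?_)
      intro h
      exact hA1 i (by linear_combination -h)
    rw [h1] at hk
    rw [Finset.sum_image (fun i _ j _ h => ha h)] at hk
    have hterm : ∀ ℓ : Fin n,
        P.eval (a ℓ) / ∏ y ∈ (insert (-1 : ℂ) S).erase (a ℓ), (a ℓ - y)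
        = (a ℓ - 1) * (∏ i ∈ univ.erase ℓ, (a i * a ℓ - 1))
            / (∏ i ∈ univ.erase ℓ, (a ℓ - a i)) := by
      intro ℓ
      have hne : (-1 : ℂ) ≠ a ℓ := fun h => hA1 ℓ h.symm
      rw [Finset.erase_insert_of_ne (fun h => hA1 ℓ h.symm),
        Finset.prod_insert (fun h => hmem (Finset.mem_of_mem_erase h)), hE]
      have hev : P.eval (a ℓ) = (a ℓ + 1) * ((a ℓ - 1) * ∏ i ∈ univ.erase ℓ, (a i * a ℓ - 1)) := by
        rw [hPeval, ← Finset.mul_prod_erase univ (fun i => a i * a ℓ - 1) (Finset.mem_univ ℓ)]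
        ring
      rw [hev, show a ℓ - (-1) = a ℓ + 1 by ring, mul_div_mul_left]
      intro h
      exact hA1 ℓ (by linear_combination h)
    rw [Finset.sum_congr rfl fun ℓ _ => hterm ℓ] at hk
    linear_combination hk
  · -- case B : some node equals -1
    push_neg at hA1
    obtain ⟨ℓ₀, hℓ₀⟩ := hA1
    have hn : 0 < n := ℓ₀.pos
    set Q : ℂ[X] := ∏ i ∈ univ.erase ℓ₀, (C (a i) * X + C (-1)) with hQ
    have hQeval : ∀ x : ℂ, Q.eval x = ∏ i ∈ univ.erase ℓ₀, (a i * x - 1) := by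
      intro x
      rw [hQ, eval_prod]
      exact Finset.prod_congr rfl fun i _ => by simp [sub_eq_add_neg]
    have hQd : Q.natDegree = n - 1 := by
      rw [hQ, natDegree_prod _ _ fun i _ => hfne i,
        Finset.sum_congr rfl fun i _ => natDegree_linear (h0 i)]
      simp [Finset.card_erase_of_mem (Finset.mem_univ ℓ₀)]
    have hQC : Q.coeff (n - 1) = -(∏ i, a i) := by
      have h2 : Q.leadingCoeff = -(∏ i, a i) := by
        rw [hQ, leadingCoeff_prod,
          Finset.prod_congr rfl fun i _ => leadingCoeff_linear (h0 i),
          ← Finset.mul_prod_erase univ a (Finset.mem_univ ℓ₀), hℓ₀]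
        ring
      rw [leadingCoeff, hQd] at h2
      exact h2
    have hk := key_sum S Q (by
      rw [hcard]
      refine lt_of_le_of_lt Polynomial.degree_le_natDegree ?_
      rw [hQd]; exact_mod_cast Nat.sub_lt hn one_pos)
    rw [hcard, hQC, Finset.sum_image (fun i _ j _ h => ha h)] at hk
    simp_rw [hE] at hk
    -- split off ℓ₀ in both sums
    rw [← Finset.add_sum_erase _ _ (Finset.mem_univ ℓ₀)] at hk ⊢
    have hQv : Q.eval (a ℓ₀) = ∏ i ∈ univ.erase ℓ₀, (a ℓ₀ - a i) := by
      rw [hQeval]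
      exact Finset.prod_congr rfl fun i _ => by rw [hℓ₀]; ring
    -- terms for ℓ ≠ ℓ₀
    have hterm : ∀ ℓ ∈ univ.erase ℓ₀,
        (a ℓ - 1) * (∏ i ∈ univ.erase ℓ, (a i * a ℓ - 1))
            / (∏ i ∈ univ.erase ℓ, (a ℓ - a i))
        = -(Q.eval (a ℓ) / ∏ i ∈ univ.erase ℓ, (a ℓ - a i)) := by
      intro ℓ hℓ
      have hℓne : ℓ ≠ ℓ₀ := (Finset.mem_erase.mp hℓ).1
      have e1 : Q.eval (a ℓ) = (a ℓ * a ℓ - 1) *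
          ∏ i ∈ (univ.erase ℓ₀).erase ℓ, (a i * a ℓ - 1) := by
        rw [hQeval, ← Finset.mul_prod_erase (univ.erase ℓ₀) (fun i => a i * a ℓ - 1)
          (Finset.mem_erase.mpr ⟨hℓne, Finset.mem_univ ℓ⟩)]
      have e2 : (∏ i ∈ univ.erase ℓ, (a i * a ℓ - 1)) = (-(a ℓ) - 1) *
          ∏ i ∈ (univ.erase ℓ₀).erase ℓ, (a i * a ℓ - 1) := by
        rw [← Finset.mul_prod_erase (univ.erase ℓ) (fun i => a i * a ℓ - 1)
          (Finset.mem_erase.mpr ⟨hℓne.symm, Finset.mem_univ ℓ₀⟩),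
          Finset.erase_right_comm]
        congr 1
        rw [hℓ₀]
        ring
      rw [e1, e2, ← neg_div]
      congr 1
      ring
    rw [Finset.sum_congr rfl hterm]
    rw [Finset.sum_neg_distrib]
    -- ℓ₀ term
    have hQv0 : Q.eval (a ℓ₀) / ∏ i ∈ univ.erase ℓ₀, (a ℓ₀ - a i) = 1 := by
      rw [hQv]; exact div_self (hEne ℓ₀)
    have h0term : (a ℓ₀ - 1) * (∏ i ∈ univ.erase ℓ₀, (a i * a ℓ₀ - 1))
        / (∏ i ∈ univ.erase ℓ₀, (a ℓ₀ - a i)) = -2 := by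
      have : (∏ i ∈ univ.erase ℓ₀, (a i * a ℓ₀ - 1)) = Q.eval (a ℓ₀) := (hQeval _).symm
      rw [this, hℓ₀, mul_div_assoc]
      rw [hℓ₀] at hQv0
      rw [hQv0]; ring
    rw [h0term]
    have hs : ∑ ℓ ∈ univ.erase ℓ₀, Q.eval (a ℓ) / ∏ i ∈ univ.erase ℓ, (a ℓ - a i)
        = -(∏ i, a i) - 1 := by
      rw [hQv0] at hk; linear_combination hk
    linear_combination -hs
theorem stmt7 (n : ℕ) (a : Fin n → ℂ) (h0 : ∀ i, a i ≠ 0)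
    (hd : ∀ i j, i ≠ j → a i ≠ a j) :
    (∏ i, a i) * (1 - ∏ i, a i)
      = ∑ ℓ : Fin n, a ℓ * (1 - a ℓ)
          * ∏ i ∈ Finset.univ.erase ℓ, (1 - a i * a ℓ) / (1 - a ℓ / a i) := by
  have hcore := core n a h0 hd
  have hsummand : ∀ ℓ : Fin n, a ℓ * (1 - a ℓ)
      * ∏ i ∈ Finset.univ.erase ℓ, (1 - a i * a ℓ) / (1 - a ℓ / a i)
      = -((∏ i, a i) * ((a ℓ - 1) * (∏ i ∈ univ.erase ℓ, (a i * a ℓ - 1))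
          / (∏ i ∈ univ.erase ℓ, (a ℓ - a i)))) := by
    intro ℓ
    have hfac : ∀ i ∈ univ.erase ℓ, (1 - a i * a ℓ) / (1 - a ℓ / a i)
        = (a i * (a i * a ℓ - 1)) / (a ℓ - a i) := by
      intro i hi
      have hi0 : a i ≠ 0 := h0 i
      have hne : a ℓ - a i ≠ 0 :=
        sub_ne_zero_of_ne (hd ℓ i (Ne.symm (Finset.mem_erase.mp hi).1))
      have h2 : 1 - a ℓ / a i ≠ 0 := by
        intro h
        apply hne
        rw [sub_eq_zero] at h ⊢
        field_simp at h
        exact h.symm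
      rw [div_eq_div_iff h2 hne]
      field_simp
      ring
    rw [Finset.prod_congr rfl hfac, Finset.prod_div_distrib, Finset.prod_mul_distrib]
    rw [show (∏ i, a i) = a ℓ * ∏ i ∈ univ.erase ℓ, a i from
      (Finset.mul_prod_erase univ a (Finset.mem_univ ℓ)).symm]
    ring
  rw [Finset.sum_congr rfl fun ℓ _ => hsummand ℓ, Finset.sum_neg_distrib, ← Finset.mul_sum,
    hcore]
  ring
end

section
/- Let 0 < q < 1, let n ≥ 1, and let λ, μ ∈ Par_n be partitions. Then ∫_{0≤x_1≤⋯≤x_n≤1} a_{λ+δ_n}(x_1,…,x_n) a_{μ+δ_n}(x_1,…,x_n) d_q x_1 ⋯ d_q x_n = q^{C(n,2)+2C(n,3)+∑_{i=1}^{n−1} i(λ_{i+1}+μ_{i+1})} (1−q)^n · ∏_{1≤i<j≤n}(1 − q^{λ_i−λ_j+j−i})(1 − q^{μ_i−μ_j+j−i}) / ∏_{i=1}^n ∏_{j=1}^n (1 − q^{λ_i+μ_j+2n−i−j+1}), where C(a,b) denotes a binomial coefficient. -/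
open Finset Polynomial
set_option maxHeartbeats 1000000


lemma two_mul_sum_range (n : ℕ) : 2 * ∑ j ∈ Finset.range n, (j:ℤ) = n*(n-1) := by
  induction n with
  | zero => simp
  | succ n ih => rw [Finset.sum_range_succ]; push_cast; push_cast at ih; nlinarith [ih]

lemma six_mul_sum_range_sq (n : ℕ) : 6 * ∑ j ∈ Finset.range n, (j:ℤ)^2 = n*(n-1)*(2*n-1) := by
  induction n with
  | zero => simp
  | succ n ih => rw [Finset.sum_range_succ]; push_cast; push_cast at ih; nlinarith [ih]

lemma chooseZ2 (n : ℕ) : ((n.choose 2 : ℤ)) * 2 = n*(n-1) := by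
  induction n with
  | zero => simp
  | succ n ih =>
    rw [Nat.choose_succ_succ, Nat.choose_one_right]
    push_cast
    push_cast at ih
    nlinarith [ih]

lemma chooseZ3 (n : ℕ) : ((n.choose 3 : ℤ)) * 6 = n*(n-1)*(n-2) := by
  induction n with
  | zero => simp
  | succ n ih =>
    have h2 := chooseZ2 n
    rw [Nat.choose_succ_succ]
    push_cast
    push_cast at ih h2
    nlinarith [ih, h2]

lemma sumE (n : ℕ) : ∑ j ∈ Finset.range n, (j:ℤ) * (2*(n:ℤ)-1-2*j) = n.choose 2 + 2*n.choose 3 := by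
  have h1 := two_mul_sum_range n
  have h2 := six_mul_sum_range_sq n
  have h3 := chooseZ2 n
  have h4 := chooseZ3 n
  have e : ∑ j ∈ Finset.range n, (j:ℤ) * (2*(n:ℤ)-1-2*j)
      = (2*(n:ℤ)-1) * (∑ j ∈ Finset.range n, (j:ℤ)) - 2 * ∑ j ∈ Finset.range n, (j:ℤ)^2 := by
    rw [Finset.mul_sum, Finset.mul_sum, ← Finset.sum_sub_distrib]
    exact Finset.sum_congr rfl fun j _ => by ring
  rw [e]
  nlinarith [h1, h2, h3, h4]

lemma hasSum_pi_geom : ∀ (n : ℕ) (r : Fin n → ℝ), (∀ i, 0 ≤ r i) → (∀ i, r i < 1) →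
    HasSum (fun ν : Fin n → ℕ => ∏ i, r i ^ ν i) (∏ i, (1 - r i)⁻¹) := by
  intro n
  induction n with
  | zero =>
    intro r _ _
    simpa using hasSum_fintype (f := fun ν : Fin 0 → ℕ => ∏ i, r i ^ ν i)
  | succ n ih =>
    intro r h0 h1
    have hgeo : HasSum (fun k : ℕ => r 0 ^ k) (1 - r 0)⁻¹ :=
      hasSum_geometric_of_lt_one (h0 0) (h1 0)
    have htail : HasSum (fun ν : Fin n → ℕ => ∏ i, r (Fin.succ i) ^ ν i) (∏ i, (1 - r (Fin.succ i))⁻¹) :=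
      ih (fun i => r (Fin.succ i)) (fun i => h0 _) (fun i => h1 _)
    have hsummable : Summable fun z : ℕ × (Fin n → ℕ) => r 0 ^ z.1 * ∏ i, r (Fin.succ i) ^ z.2 i := by
      apply Summable.mul_of_nonneg hgeo.summable htail.summable
      · intro k; exact pow_nonneg (h0 0) k
      · intro ν; exact Finset.prod_nonneg fun i _ => pow_nonneg (h0 _) _
    have hmul : HasSum (fun z : ℕ × (Fin n → ℕ) => r 0 ^ z.1 * ∏ i, r (Fin.succ i) ^ z.2 i)
        ((1 - r 0)⁻¹ * ∏ i, (1 - r (Fin.succ i))⁻¹) := by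
      have hval := HasSum.mul_eq hgeo htail hsummable.hasSum
      rw [hval]
      exact hsummable.hasSum
    have key : HasSum ((fun ν : Fin (n+1) → ℕ => ∏ i, r i ^ ν i) ∘ (Fin.consEquiv fun _ => ℕ)) (∏ i, (1 - r i)⁻¹) := by
      rw [Fin.prod_univ_succ]
      convert hmul using 1
      funext z
      simp only [Function.comp_apply, Fin.consEquiv_apply]
      rw [Fin.prod_univ_succ]
      simp
    exact (Equiv.hasSum_iff _).mp key

lemma pair_swap_prod {n : ℕ} (g : Fin n → Fin n → ℝ) :
    ∏ i : Fin n, ∏ k ∈ Finset.univ.erase i, g i k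
      = ∏ i : Fin n, ∏ j ∈ Finset.Ioi i, (g i j * g j i) := by
  have herase : ∀ i : Fin n, Finset.univ.erase i = Finset.Iio i ∪ Finset.Ioi i := by
    intro i
    ext k
    simp only [Finset.mem_erase, Finset.mem_univ, and_true, Finset.mem_union,
      Finset.mem_Iio, Finset.mem_Ioi]
    exact ⟨fun h => h.lt_or_gt, fun h => h.elim ne_of_lt (fun h' => (ne_of_lt h').symm)⟩
  have hdisj : ∀ i : Fin n, Disjoint (Finset.Iio i) (Finset.Ioi i) := fun i =>
    Finset.disjoint_left.mpr fun k hk hk' => absurd (Finset.mem_Iio.mp hk)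
      (not_lt.mpr (le_of_lt (Finset.mem_Ioi.mp hk')))
  calc ∏ i : Fin n, ∏ k ∈ Finset.univ.erase i, g i k
      = ∏ i : Fin n, ((∏ k ∈ Finset.Iio i, g i k) * ∏ k ∈ Finset.Ioi i, g i k) := by
        refine Finset.prod_congr rfl fun i _ => ?_
        rw [herase i, Finset.prod_union (hdisj i)]
    _ = (∏ i : Fin n, ∏ k ∈ Finset.Iio i, g i k) * ∏ i : Fin n, ∏ k ∈ Finset.Ioi i, g i k := by
        rw [Finset.prod_mul_distrib]
    _ = (∏ i : Fin n, ∏ k ∈ Finset.Ioi i, g k i) * ∏ i : Fin n, ∏ k ∈ Finset.Ioi i, g i k := by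
        congr 1
        refine Finset.prod_comm' ?_
        intro i k
        simp [Finset.mem_Iio, Finset.mem_Ioi]
    _ = ∏ i : Fin n, ∏ j ∈ Finset.Ioi i, (g i j * g j i) := by
        rw [← Finset.prod_mul_distrib]
        refine Finset.prod_congr rfl fun i _ => ?_
        rw [← Finset.prod_mul_distrib]
        exact Finset.prod_congr rfl fun j _ => mul_comm _ _

lemma cauchy_det {n : ℕ} (x y : Fin n → ℝ) (hy0 : ∀ i, y i ≠ 0) (hyinj : Function.Injective y)
    (hxy : ∀ i j, 1 - x i * y j ≠ 0) :
    Matrix.det (Matrix.of fun i j : Fin n => (1 - x i * y j)⁻¹)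
      = ((∏ i : Fin n, ∏ j ∈ Finset.Ioi i, (x j - x i))
          * ∏ i : Fin n, ∏ j ∈ Finset.Ioi i, (y j - y i))
        / ∏ i : Fin n, ∏ j : Fin n, (1 - x i * y j) := by
  rcases Nat.eq_zero_or_pos n with rfl | hn
  · simp [Matrix.det_isEmpty]
  set p : Fin n → Polynomial ℝ :=
    fun j => ∏ k ∈ Finset.univ.erase j, (1 - Polynomial.C (y k) * Polynomial.X) with hp
  have hdeg : ∀ j, (p j).natDegree < n := by
    intro j
    have h1 : ∀ k : Fin n, (1 - Polynomial.C (y k) * Polynomial.X : ℝ[X]).natDegree ≤ 1 := by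
      intro k
      refine le_trans (Polynomial.natDegree_sub_le _ _) ?_
      rw [max_le_iff]
      exact ⟨by simp, le_trans (Polynomial.natDegree_C_mul_le _ _) Polynomial.natDegree_X_le⟩
    calc (p j).natDegree ≤ ∑ k ∈ Finset.univ.erase j, (1 - Polynomial.C (y k) * Polynomial.X : ℝ[X]).natDegree :=
          Polynomial.natDegree_prod_le _ _
      _ ≤ ∑ _k ∈ Finset.univ.erase j, 1 := Finset.sum_le_sum fun k _ => h1 k
      _ = n - 1 := by simp [Finset.card_erase_of_mem]
      _ < n := by omega
  have heval : ∀ (t : ℝ) (j : Fin n), (p j).eval t = ∏ k ∈ Finset.univ.erase j, (1 - y k * t) := by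
    intro t j
    rw [hp]
    simp [Polynomial.eval_prod]
  have hexp : ∀ (t : ℝ) (j : Fin n), (p j).eval t = ∑ m : Fin n, (p j).coeff m * t ^ (m : ℕ) := by
    intro t j
    rw [Polynomial.eval_eq_sum_range' (hdeg j), ← Fin.sum_univ_eq_sum_range]
  set A : Matrix (Fin n) (Fin n) ℝ := Matrix.of fun m j => (p j).coeff m with hA
  have hP : (Matrix.of fun i j : Fin n => (p j).eval (x i)) = (Matrix.vandermonde x) * A := by
    ext i j
    simp only [Matrix.of_apply, Matrix.mul_apply]
    rw [hexp (x i) j]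
    exact Finset.sum_congr rfl fun m _ => by
      simp [Matrix.vandermonde, hA, mul_comm]
  have hP' : (Matrix.of fun i j : Fin n => (p j).eval ((y i)⁻¹))
      = (Matrix.vandermonde fun i => (y i)⁻¹) * A := by
    ext i j
    simp only [Matrix.of_apply, Matrix.mul_apply]
    rw [hexp ((y i)⁻¹) j]
    exact Finset.sum_congr rfl fun m _ => by
      simp [Matrix.vandermonde, hA, mul_comm]
  set d : Fin n → ℝ := fun i => ∏ k ∈ Finset.univ.erase i, (1 - y k * (y i)⁻¹) with hd
  have hdiag : (Matrix.of fun i j : Fin n => (p j).eval ((y i)⁻¹)) = Matrix.diagonal d := by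
    ext i j
    rcases eq_or_ne i j with rfl | hij
    · simp [Matrix.diagonal, heval, hd]
    · have hz : (p j).eval ((y i)⁻¹) = 0 := by
        rw [heval]
        refine Finset.prod_eq_zero (Finset.mem_erase.mpr ⟨hij, Finset.mem_univ i⟩) ?_
        rw [mul_inv_cancel₀ (hy0 i), sub_self]
      simp [Matrix.diagonal, hij, hz]
  have hdetd : (Matrix.vandermonde fun i => (y i)⁻¹).det * A.det = ∏ i, d i := by
    rw [← Matrix.det_mul, ← hP', hdiag, Matrix.det_diagonal]
  have hVy : (Matrix.vandermonde fun i => (y i)⁻¹).det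
      = ∏ i : Fin n, ∏ j ∈ Finset.Ioi i, ((y j)⁻¹ - (y i)⁻¹) := Matrix.det_vandermonde _
  have hVyne : (Matrix.vandermonde fun i => (y i)⁻¹).det ≠ 0 := by
    rw [hVy]
    refine Finset.prod_ne_zero_iff.mpr fun i _ => Finset.prod_ne_zero_iff.mpr fun j hj => ?_
    have hij : i ≠ j := ne_of_lt (Finset.mem_Ioi.mp hj)
    exact sub_ne_zero.mpr fun h => hij (hyinj (inv_injective h)).symm
  -- pairing identity : ∏ d = detVy' * Ny
  have hpair : ∏ i, d i
      = (∏ i : Fin n, ∏ j ∈ Finset.Ioi i, ((y j)⁻¹ - (y i)⁻¹))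
        * ∏ i : Fin n, ∏ j ∈ Finset.Ioi i, (y j - y i) := by
    have := pair_swap_prod (fun i k => 1 - y k * (y i)⁻¹)
    rw [hd]
    rw [this, ← Finset.prod_mul_distrib]
    refine Finset.prod_congr rfl fun i _ => ?_
    rw [← Finset.prod_mul_distrib]
    refine Finset.prod_congr rfl fun j hj => ?_
    have hyi := hy0 i
    have hyj := hy0 j
    have e1 : (1 - y j * (y i)⁻¹) = (y i - y j) * (y i)⁻¹ := by
      rw [sub_mul, mul_inv_cancel₀ hyi]
    have e2 : (1 - y i * (y j)⁻¹) = (y j - y i) * (y j)⁻¹ := by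
      rw [sub_mul, mul_inv_cancel₀ hyj]
    have e3 : ((y j)⁻¹ - (y i)⁻¹) = (y i - y j) * ((y i)⁻¹ * (y j)⁻¹) := by
      rw [sub_mul, ← mul_assoc, mul_inv_cancel₀ hyi, one_mul, mul_comm ((y i)⁻¹),
        ← mul_assoc, mul_inv_cancel₀ hyj, one_mul]
    rw [e1, e2, e3]
    ring
  have hAdet : A.det = ∏ i : Fin n, ∏ j ∈ Finset.Ioi i, (y j - y i) := by
    have h1 : (Matrix.vandermonde fun i => (y i)⁻¹).det * A.det
        = (Matrix.vandermonde fun i => (y i)⁻¹).det * ∏ i : Fin n, ∏ j ∈ Finset.Ioi i, (y j - y i) := by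
      rw [hdetd, hpair, hVy]
    exact mul_left_cancel₀ hVyne h1
  -- the matrix C
  have hprodne : ∀ i, (∏ k, (1 - x i * y k)) ≠ 0 :=
    fun i => Finset.prod_ne_zero_iff.mpr fun k _ => hxy i k
  have hC : (Matrix.of fun i j : Fin n => (1 - x i * y j)⁻¹)
      = Matrix.of fun i j : Fin n => (∏ k, (1 - x i * y k))⁻¹ * ((p j).eval (x i)) := by
    ext i j
    simp only [Matrix.of_apply]
    rw [heval]
    have hsplit : (∏ k, (1 - x i * y k))
        = (1 - x i * y j) * ∏ k ∈ Finset.univ.erase j, (1 - x i * y k) :=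
      (Finset.mul_prod_erase Finset.univ _ (Finset.mem_univ j)).symm
    have herasene : (∏ k ∈ Finset.univ.erase j, (1 - x i * y k)) ≠ 0 :=
      Finset.prod_ne_zero_iff.mpr fun k _ => hxy i k
    have hcomm : ∏ k ∈ Finset.univ.erase j, (1 - y k * x i)
        = ∏ k ∈ Finset.univ.erase j, (1 - x i * y k) :=
      Finset.prod_congr rfl fun k _ => by ring
    rw [hcomm, hsplit, mul_inv, mul_assoc, inv_mul_cancel₀ herasene, mul_one]
  have hdetC : (Matrix.of fun i j : Fin n => (1 - x i * y j)⁻¹).det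
      = (∏ i, (∏ k, (1 - x i * y k))⁻¹)
        * ((Matrix.vandermonde x).det * A.det) := by
    rw [hC]
    have h := Matrix.det_mul_column (fun i => (∏ k, (1 - x i * y k))⁻¹)
      (Matrix.of fun i j : Fin n => (p j).eval (x i))
    simp only [Matrix.of_apply] at h
    rw [hP, Matrix.det_mul] at h
    exact h
  rw [hdetC, hAdet, Matrix.det_vandermonde]
  rw [div_eq_mul_inv, ← Finset.prod_inv_distrib]
  ring


lemma alt_expand (n : ℕ) (a : Fin n → ℕ) (x : Fin n → ℝ) :
    alt n a x = ∑ σ : Equiv.Perm (Fin n), ((Equiv.Perm.sign σ : ℤ) : ℝ) * ∏ i, x i ^ a (σ i) := by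
  rw [alt, Matrix.det_apply']
  refine Fintype.sum_equiv (Equiv.inv (Equiv.Perm (Fin n))) _ _ ?_
  intro σ
  simp only [Equiv.inv_apply, Equiv.Perm.sign_inv]
  congr 1
  have h2 := Equiv.prod_comp σ (fun i => x i ^ a (σ⁻¹ i))
  simp only [show ∀ (π : Equiv.Perm (Fin n)) i, π⁻¹ (π i) = i from fun π i => Equiv.Perm.inv_eq_iff_eq.mpr rfl] at h2
  simpa using h2

lemma alt_comp_perm (n : ℕ) (a : Fin n → ℕ) (x : Fin n → ℝ) (π : Equiv.Perm (Fin n)) :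
    alt n a (x ∘ π) = ((Equiv.Perm.sign π : ℤ) : ℝ) * alt n a x := by
  have h : (Matrix.of fun i j : Fin n => (x ∘ π) i ^ a j)
      = (Matrix.of fun i j : Fin n => x i ^ a j).submatrix π id := rfl
  rw [alt, h, Matrix.det_permute, alt]

lemma alt_eq_zero_of_eq (n : ℕ) (a : Fin n → ℕ) (x : Fin n → ℝ) {i j : Fin n}
    (hij : i ≠ j) (h : x i = x j) : alt n a x = 0 := by
  refine Matrix.det_zero_of_row_eq hij ?_
  funext k
  simp [h]

lemma pair_sum_det {n : ℕ} (g : Matrix (Fin n) (Fin n) ℝ) :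
    ∑ p : Equiv.Perm (Fin n) × Equiv.Perm (Fin n),
        ((Equiv.Perm.sign p.1 : ℤ) : ℝ) * ((Equiv.Perm.sign p.2 : ℤ) : ℝ)
          * ∏ i, g (p.1 i) (p.2 i)
      = (Nat.factorial n : ℝ) * g.det := by
  rw [Fintype.sum_prod_type_right]
  have inner : ∀ τ : Equiv.Perm (Fin n),
      (∑ σ : Equiv.Perm (Fin n), ((Equiv.Perm.sign σ : ℤ) : ℝ) * ((Equiv.Perm.sign τ : ℤ) : ℝ)
        * ∏ i, g (σ i) (τ i)) = g.det := by
    intro τ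
    rw [Matrix.det_apply']
    refine Fintype.sum_equiv (Equiv.mulRight τ⁻¹) _ _ ?_
    intro σ
    simp only [Equiv.coe_mulRight, Equiv.Perm.sign_mul, Equiv.Perm.sign_inv,
      Equiv.Perm.mul_apply]
    have h2 := Equiv.prod_comp τ (fun j => g (σ (τ⁻¹ j)) j)
    simp only [show ∀ (π : Equiv.Perm (Fin n)) i, π⁻¹ (π i) = i from fun π i => Equiv.Perm.inv_eq_iff_eq.mpr rfl] at h2
    rw [← h2]
    push_cast
    ring
  calc ∑ τ : Equiv.Perm (Fin n), (∑ σ : Equiv.Perm (Fin n), ((Equiv.Perm.sign σ : ℤ) : ℝ) * ((Equiv.Perm.sign τ : ℤ) : ℝ) * ∏ i, g (σ i) (τ i))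
      = ∑ _τ : Equiv.Perm (Fin n), g.det := Finset.sum_congr rfl fun τ _ => inner τ
    _ = (Nat.factorial n : ℝ) * g.det := by
        rw [Finset.sum_const, Finset.card_univ, Fintype.card_perm, Fintype.card_fin, nsmul_eq_mul]

lemma strictanti_eq_of_range_eq {n : ℕ} {f g : Fin n → ℕ} (hf : StrictAnti f)
    (hg : StrictAnti g) (h : Set.range f = Set.range g) : f = g :=
  (hf.range_inj hg).mp h

lemma exists_sorted_decomp {n : ℕ} (ν : Fin n → ℕ) (hinj : Function.Injective ν) :
    ∃ (ν' : Fin n → ℕ) (hν' : StrictAnti ν') (π : Equiv.Perm (Fin n)), ν' ∘ π = ν := by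
  classical
  set s : Finset ℕ := Finset.image ν Finset.univ with hs
  have hcard : s.card = n := by
    rw [hs, Finset.card_image_of_injective _ hinj, Finset.card_univ, Fintype.card_fin]
  set o := s.orderIsoOfFin hcard with ho
  have hmem : ∀ i, ν i ∈ s := fun i => Finset.mem_image_of_mem ν (Finset.mem_univ i)
  set f : Fin n → Fin n := fun i => o.symm ⟨ν i, hmem i⟩ with hf
  have hfinj : Function.Injective f := by
    intro i j hij
    have h2 := congrArg (fun z => (o z : ℕ)) hij
    simp only [hf, OrderIso.apply_symm_apply] at h2
    exact hinj h2
  have hfbij : Function.Bijective f := (Finite.injective_iff_bijective).mp hfinj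
  set σ : Equiv.Perm (Fin n) := Equiv.ofBijective f hfbij with hσ
  have hval : ∀ i, (o (σ i) : ℕ) = ν i := by
    intro i
    have : σ i = f i := rfl
    rw [this, hf]
    simp
  refine ⟨fun j => (o (Fin.rev j) : ℕ), ?_, σ.trans (Fin.revPerm), ?_⟩
  · intro i j hij
    have : Fin.rev j < Fin.rev i := Fin.rev_lt_rev.mpr hij
    exact_mod_cast o.strictMono this
  · funext i
    simp only [Function.comp_apply, Equiv.trans_apply, Fin.revPerm_apply, Fin.rev_rev]
    exact hval i

lemma symmetrize {n : ℕ} (F : (Fin n → ℕ) → ℝ) (hsum : Summable F)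
    (hzero : ∀ ν : Fin n → ℕ, ¬ Function.Injective ν → F ν = 0)
    (hperm : ∀ (ν : Fin n → ℕ) (π : Equiv.Perm (Fin n)), F (ν ∘ π) = F ν) :
    ∑' ν : (Fin n → ℕ), F ν
      = (Nat.factorial n : ℝ) * ∑' ν : {ν : Fin n → ℕ // Antitone ν}, F ν.1 := by
  classical
  -- Step 1: antitone tsum = strict antitone tsum
  have step1 : ∑' ν : {ν : Fin n → ℕ // Antitone ν}, F ν.1
      = ∑' ν : {ν : Fin n → ℕ // StrictAnti ν}, F ν.1 := by
    refine (tsum_eq_tsum_of_ne_zero_bij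
      (f := fun ν : {ν : Fin n → ℕ // Antitone ν} => F ν.1)
      (g := fun ν : {ν : Fin n → ℕ // StrictAnti ν} => F ν.1)
      (fun p => ⟨p.1.1, p.1.2.antitone⟩) ?_ ?_ ?_)
    · intro p q hpq
      have h1 : p.1.1 = q.1.1 := congrArg (Subtype.val : {ν : Fin n → ℕ // Antitone ν} → (Fin n → ℕ)) hpq
      exact Subtype.ext (Subtype.ext h1)
    · rintro ⟨ν, ha⟩ hν
      have hinj : Function.Injective ν := by
        by_contra hni
        exact hν (hzero ν hni)
      have hstrict : StrictAnti ν := by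
        intro i j hij
        exact lt_of_le_of_ne (ha hij.le) fun h => hij.ne (hinj h).symm
      exact ⟨⟨⟨ν, hstrict⟩, hν⟩, rfl⟩
    · intro p; rfl
  -- Step 2: full tsum = tsum over sorted × perm
  have step2 : ∑' ν : (Fin n → ℕ), F ν
      = ∑' p : {ν : Fin n → ℕ // StrictAnti ν} × Equiv.Perm (Fin n), F (p.1.1 ∘ p.2) := by
    refine (tsum_eq_tsum_of_ne_zero_bij
      (f := F) (g := fun p : {ν : Fin n → ℕ // StrictAnti ν} × Equiv.Perm (Fin n) => F (p.1.1 ∘ p.2))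
      (fun p => p.1.1.1 ∘ p.1.2) ?_ ?_ ?_)
    · rintro ⟨⟨⟨ν, hν⟩, π⟩, hp⟩ ⟨⟨⟨ν', hν'⟩, π'⟩, hp'⟩ h
      simp only at h
      have hrange : Set.range ν = Set.range ν' := by
        have h1 : Set.range (ν ∘ π) = Set.range ν := by
          rw [Set.range_comp, π.surjective.range_eq, Set.image_univ]
        have h2 : Set.range (ν' ∘ π') = Set.range ν' := by
          rw [Set.range_comp, π'.surjective.range_eq, Set.image_univ]
        rw [← h1, ← h2, h]
      have hνν' : ν = ν' := strictanti_eq_of_range_eq hν hν' hrange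
      subst hνν'
      have hππ' : π = π' := by
        ext i
        exact congrArg Fin.val (hν.injective (congrFun h i))
      simp [hππ']
    · intro ν hν
      have hinj : Function.Injective ν := by
        by_contra hni
        exact hν (hzero ν hni)
      obtain ⟨ν', hν', π, hdecomp⟩ := exists_sorted_decomp ν hinj
      refine ⟨⟨(⟨ν', hν'⟩, π), ?_⟩, ?_⟩
      · simp only [Function.mem_support]
        rw [hdecomp]
        exact hν
      · exact hdecomp
    · intro p; rfl
  -- Step 3: compute tsum over product
  have hXsum : Summable (fun x : {ν : Fin n → ℕ // StrictAnti ν} => F x.1) := by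
    have := hsum.subtype {ν : Fin n → ℕ | StrictAnti ν}
    exact this
  have hprodsum : Summable
      (fun p : {ν : Fin n → ℕ // StrictAnti ν} × Equiv.Perm (Fin n) => F p.1.1) := by
    have h1 : Summable (fun x : {ν : Fin n → ℕ // StrictAnti ν} => |F x.1|) := hXsum.abs
    have h2 : Summable (fun _ : Equiv.Perm (Fin n) => (1 : ℝ)) := summable_of_finite_support
      (Set.toFinite _)
    have h3 := h1.mul_of_nonneg h2 (fun x => abs_nonneg _) (fun _ => zero_le_one)
    rw [← summable_abs_iff]
    simpa using h3
  have step3 : ∑' p : {ν : Fin n → ℕ // StrictAnti ν} × Equiv.Perm (Fin n), F (p.1.1 ∘ p.2)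
      = (Nat.factorial n : ℝ) * ∑' ν : {ν : Fin n → ℕ // StrictAnti ν}, F ν.1 := by
    have heq : (fun p : {ν : Fin n → ℕ // StrictAnti ν} × Equiv.Perm (Fin n) => F (p.1.1 ∘ p.2))
        = fun p => F p.1.1 := by
      funext p
      exact hperm p.1.1 p.2
    rw [heq, Summable.tsum_prod' hprodsum (fun x => (hasSum_fintype _).summable)]
    have : ∀ x : {ν : Fin n → ℕ // StrictAnti ν},
        ∑' _σ : Equiv.Perm (Fin n), F x.1 = (Nat.factorial n : ℝ) * F x.1 := by
      intro x
      rw [tsum_fintype]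
      rw [Finset.sum_const, Finset.card_univ, Fintype.card_perm, Fintype.card_fin, nsmul_eq_mul]
    rw [tsum_congr this, tsum_mul_left]
  rw [step2, step3, step1]

theorem stmt8 (q : ℝ) (hq0 : 0 < q) (hq1 : q < 1) (n : ℕ) (hn : 1 ≤ n)
    (lam μ : Fin n → ℕ) (hlam : Antitone lam) (hμ : Antitone μ) :
    qint q n (fun x => alt n (stair n lam) x * alt n (stair n μ) x)
      = q ^ (n.choose 2 + 2 * n.choose 3 + ∑ i : Fin n, (i : ℕ) * (lam i + μ i))
          * (1 - q) ^ n
          * (∏ i : Fin n, ∏ j ∈ Finset.Ioi i,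
              (1 - q ^ ((lam i : ℤ) - (lam j : ℤ) + ((j : ℕ) : ℤ) - ((i : ℕ) : ℤ)))
                * (1 - q ^ ((μ i : ℤ) - (μ j : ℤ) + ((j : ℕ) : ℤ) - ((i : ℕ) : ℤ))))
          / (∏ i : Fin n, ∏ j : Fin n,
              (1 - q ^ ((lam i : ℤ) + (μ j : ℤ)
                  + 2 * (n : ℤ) - 1 - ((i : ℕ) : ℤ) - ((j : ℕ) : ℤ)))) := by
  classical
  have hq0' : (0:ℝ) ≤ q := hq0.le
  have hqne : q ≠ 0 := hq0.ne'
  set a : Fin n → ℕ := stair n lam with ha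
  set b : Fin n → ℕ := stair n μ with hb
  have hai : ∀ {i j : Fin n}, i < j → a j < a i := by
    intro i j hij
    have h1 : lam j ≤ lam i := hlam hij.le
    have h2 : (i:ℕ) < (j:ℕ) := hij
    have h3 : (j:ℕ) < n := j.2
    simp only [ha, stair]
    omega
  have hbi : ∀ {i j : Fin n}, i < j → b j < b i := by
    intro i j hij
    have h1 : μ j ≤ μ i := hμ hij.le
    have h2 : (i:ℕ) < (j:ℕ) := hij
    have h3 : (j:ℕ) < n := j.2
    simp only [hb, stair]
    omega
  set xv : Fin n → ℝ := fun i => q ^ (a i) with hxv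
  set yv : Fin n → ℝ := fun j => q ^ (b j + 1) with hyv
  set F : (Fin n → ℕ) → ℝ := fun ν => q ^ (∑ i, ν i) *
    (alt n a (fun i => q ^ ν i) * alt n b (fun i => q ^ ν i)) with hF
  -- expansion of F over pairs of permutations
  have hFexp : ∀ ν : Fin n → ℕ, F ν
      = ∑ p : Equiv.Perm (Fin n) × Equiv.Perm (Fin n),
        ((Equiv.Perm.sign p.1 : ℤ) : ℝ) * ((Equiv.Perm.sign p.2 : ℤ) : ℝ)
          * ∏ i, (q ^ (a (p.1 i) + b (p.2 i) + 1)) ^ ν i := by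
    intro ν
    rw [hF]
    simp only
    rw [alt_expand n a, alt_expand n b, Finset.sum_mul_sum, Finset.mul_sum]
    rw [Fintype.sum_prod_type]
    refine Finset.sum_congr rfl fun σ _ => ?_
    rw [Finset.mul_sum]
    refine Finset.sum_congr rfl fun τ _ => ?_
    have hmerge : q ^ (∑ i, ν i) * ((∏ i, (q ^ ν i) ^ a (σ i)) * (∏ i, (q ^ ν i) ^ b (τ i)))
        = ∏ i, (q ^ (a (σ i) + b (τ i) + 1)) ^ ν i := by
      rw [← Finset.prod_pow_eq_pow_sum, ← Finset.prod_mul_distrib, ← Finset.prod_mul_distrib]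
      refine Finset.prod_congr rfl fun i _ => ?_
      rw [← pow_mul, ← pow_mul, ← pow_mul, ← pow_add, ← pow_add]
      congr 1
      ring
    rw [← hmerge]
    ring
  -- per-pair geometric sums
  have hterm : ∀ (σ τ : Equiv.Perm (Fin n)), HasSum
      (fun ν : Fin n → ℕ => ∏ i, (q ^ (a (σ i) + b (τ i) + 1)) ^ ν i)
      (∏ i, (1 - q ^ (a (σ i) + b (τ i) + 1))⁻¹) := by
    intro σ τ
    exact hasSum_pi_geom n _ (fun i => pow_nonneg hq0' _)
      (fun i => pow_lt_one₀ hq0' hq1 (by omega))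
  have hFsum : Summable F := by
    rw [show F = _ from funext hFexp]
    apply summable_sum
    intro p _
    exact ((hterm p.1 p.2).summable.mul_left _)
  have hzero : ∀ ν : Fin n → ℕ, ¬ Function.Injective ν → F ν = 0 := by
    intro ν hni
    rw [Function.not_injective_iff] at hni
    obtain ⟨i, j, hvv, hij⟩ := hni
    have hz : alt n a (fun i => q ^ ν i) = 0 :=
      alt_eq_zero_of_eq n a _ hij (congrArg (q ^ ·) hvv)
    rw [hF]
    simp only
    rw [hz]
    ring
  have hperm : ∀ (ν : Fin n → ℕ) (π : Equiv.Perm (Fin n)), F (ν ∘ π) = F ν := by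
    intro ν π
    rw [hF]
    simp only
    have h1 : ∑ i, (ν ∘ π) i = ∑ i, ν i := Equiv.sum_comp π ν
    have h2 : (fun i => q ^ (ν ∘ π) i) = (fun i => q ^ ν i) ∘ π := rfl
    rw [h1, h2, alt_comp_perm, alt_comp_perm]
    have hsq : ((Equiv.Perm.sign π : ℤ) : ℝ) * ((Equiv.Perm.sign π : ℤ) : ℝ) = 1 := by
      rcases Int.units_eq_one_or (Equiv.Perm.sign π) with h | h <;> rw [h] <;> norm_num
    calc q ^ (∑ i, ν i) * (((Equiv.Perm.sign π : ℤ) : ℝ) * alt n a (fun i => q ^ ν i)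
          * (((Equiv.Perm.sign π : ℤ) : ℝ) * alt n b (fun i => q ^ ν i)))
        = (((Equiv.Perm.sign π : ℤ) : ℝ) * ((Equiv.Perm.sign π : ℤ) : ℝ))
            * (q ^ (∑ i, ν i) * (alt n a (fun i => q ^ ν i) * alt n b (fun i => q ^ ν i))) := by
          ring
      _ = q ^ (∑ i, ν i) * (alt n a (fun i => q ^ ν i) * alt n b (fun i => q ^ ν i)) := by
          rw [hsq, one_mul]
  -- total tsum equals n! times the Cauchy-type determinant
  have hdet : ∑' ν : Fin n → ℕ, F ν
      = (n.factorial : ℝ) * (Matrix.of fun i j : Fin n => (1 - q ^ (a i + b j + 1))⁻¹).det := by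
    have hsummand : ∀ p : Equiv.Perm (Fin n) × Equiv.Perm (Fin n),
        Summable (fun ν : Fin n → ℕ =>
          ((Equiv.Perm.sign p.1 : ℤ) : ℝ) * ((Equiv.Perm.sign p.2 : ℤ) : ℝ)
            * ∏ i, (q ^ (a (p.1 i) + b (p.2 i) + 1)) ^ ν i) := by
      intro p
      exact (hterm p.1 p.2).summable.mul_left
        (((Equiv.Perm.sign p.1 : ℤ) : ℝ) * ((Equiv.Perm.sign p.2 : ℤ) : ℝ))
    rw [tsum_congr hFexp]
    rw [Summable.tsum_finsetSum (fun p _ => hsummand p)]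
    have hval : ∀ p : Equiv.Perm (Fin n) × Equiv.Perm (Fin n),
        (∑' ν : Fin n → ℕ, ((Equiv.Perm.sign p.1 : ℤ) : ℝ) * ((Equiv.Perm.sign p.2 : ℤ) : ℝ)
          * ∏ i, (q ^ (a (p.1 i) + b (p.2 i) + 1)) ^ ν i)
        = ((Equiv.Perm.sign p.1 : ℤ) : ℝ) * ((Equiv.Perm.sign p.2 : ℤ) : ℝ)
          * ∏ i, (1 - q ^ (a (p.1 i) + b (p.2 i) + 1))⁻¹ := by
      intro p
      rw [tsum_mul_left, (hterm p.1 p.2).tsum_eq]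
    rw [Finset.sum_congr rfl fun p _ => hval p]
    exact pair_sum_det (Matrix.of fun i j : Fin n => (1 - q ^ (a i + b j + 1))⁻¹)
  have hsym := symmetrize F hFsum hzero hperm
  have hfac : (n.factorial : ℝ) ≠ 0 := Nat.cast_ne_zero.mpr (Nat.factorial_ne_zero n)
  have hanti : ∑' ν : {ν : Fin n → ℕ // Antitone ν}, F ν.1
      = (Matrix.of fun i j : Fin n => (1 - q ^ (a i + b j + 1))⁻¹).det :=
    mul_left_cancel₀ hfac (hsym.symm.trans hdet)
  -- Cauchy determinant evaluation
  have hyne : ∀ j, yv j ≠ 0 := fun j => pow_ne_zero _ hqne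
  have hystrict : StrictMono yv := by
    intro j j' hjj'
    have hlt : b j' + 1 < b j + 1 := by have := hbi hjj'; omega
    exact pow_lt_pow_right_of_lt_one₀ hq0 hq1 hlt
  have hxyne : ∀ i j, 1 - xv i * yv j ≠ 0 := by
    intro i j
    have hlt : xv i * yv j < 1 := by
      rw [hxv, hyv]
      simp only
      rw [← pow_add]
      exact pow_lt_one₀ hq0' hq1 (by omega)
    exact sub_ne_zero.mpr (ne_of_lt hlt).symm
  have hGxy : (Matrix.of fun i j : Fin n => (1 - q ^ (a i + b j + 1))⁻¹)
      = Matrix.of fun i j : Fin n => (1 - xv i * yv j)⁻¹ := by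
    ext i j
    simp only [Matrix.of_apply, hxv, hyv]
    rw [← pow_add, ← add_assoc]
  have hcauchy := cauchy_det xv yv hyne hystrict.injective hxyne
  -- numerator factorizations
  have hxfac : ∀ (i j : Fin n), i < j → xv j - xv i = q ^ (a j) * (1 - q ^ (a i - a j)) := by
    intro i j hij
    have h := (hai hij).le
    rw [hxv]
    simp only
    rw [mul_sub, mul_one, ← pow_add, Nat.add_sub_cancel' h]
  have hyfac : ∀ (i j : Fin n), i < j → yv j - yv i = q ^ (b j + 1) * (1 - q ^ (b i - b j)) := by
    intro i j hij
    have h := (hbi hij).le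
    rw [hyv]
    simp only
    rw [mul_sub, mul_one, ← pow_add]
    congr 2
    omega
  have hX : ∏ i : Fin n, ∏ j ∈ Finset.Ioi i, (xv j - xv i)
      = (q ^ (∑ i : Fin n, ∑ j ∈ Finset.Ioi i, a j))
        * ∏ i : Fin n, ∏ j ∈ Finset.Ioi i, (1 - q ^ (a i - a j)) := by
    have h1 : ∀ i : Fin n, ∏ j ∈ Finset.Ioi i, (xv j - xv i)
        = (q ^ (∑ j ∈ Finset.Ioi i, a j)) * ∏ j ∈ Finset.Ioi i, (1 - q ^ (a i - a j)) := by
      intro i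
      rw [← Finset.prod_pow_eq_pow_sum, ← Finset.prod_mul_distrib]
      exact Finset.prod_congr rfl fun j hj => hxfac i j (Finset.mem_Ioi.mp hj)
    rw [Finset.prod_congr rfl fun i _ => h1 i, Finset.prod_mul_distrib,
      Finset.prod_pow_eq_pow_sum]
  have hY : ∏ i : Fin n, ∏ j ∈ Finset.Ioi i, (yv j - yv i)
      = (q ^ (∑ i : Fin n, ∑ j ∈ Finset.Ioi i, (b j + 1)))
        * ∏ i : Fin n, ∏ j ∈ Finset.Ioi i, (1 - q ^ (b i - b j)) := by
    have h1 : ∀ i : Fin n, ∏ j ∈ Finset.Ioi i, (yv j - yv i)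
        = (q ^ (∑ j ∈ Finset.Ioi i, (b j + 1))) * ∏ j ∈ Finset.Ioi i, (1 - q ^ (b i - b j)) := by
      intro i
      rw [← Finset.prod_pow_eq_pow_sum, ← Finset.prod_mul_distrib]
      exact Finset.prod_congr rfl fun j hj => hyfac i j (Finset.mem_Ioi.mp hj)
    rw [Finset.prod_congr rfl fun i _ => h1 i, Finset.prod_mul_distrib,
      Finset.prod_pow_eq_pow_sum]
  -- exponent bookkeeping
  have hswap : ∀ f : Fin n → ℕ, ∑ i : Fin n, ∑ j ∈ Finset.Ioi i, f j
      = ∑ j : Fin n, (j : ℕ) * f j := by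
    intro f
    rw [Finset.sum_comm' (s := Finset.univ) (t := fun i => Finset.Ioi i)
      (t' := Finset.univ) (s' := fun j => Finset.Iio j)
      (by intro i j; simp [Finset.mem_Ioi, Finset.mem_Iio, and_comm])]
    refine Finset.sum_congr rfl fun j _ => ?_
    rw [Finset.sum_const]
    have hc : (Finset.Iio j).card = (j:ℕ) := by simp
    rw [hc, smul_eq_mul]
  have hEsum : (∑ i : Fin n, ∑ j ∈ Finset.Ioi i, a j)
        + (∑ i : Fin n, ∑ j ∈ Finset.Ioi i, (b j + 1))
      = n.choose 2 + 2 * n.choose 3 + ∑ i : Fin n, (i : ℕ) * (lam i + μ i) := by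
    rw [hswap a, hswap (fun j => b j + 1)]
    have key : ∀ j : Fin n, (((j:ℕ) * a j + (j:ℕ) * (b j + 1) : ℕ) : ℤ)
        = (j:ℤ) * ((lam j:ℤ) + (μ j:ℤ)) + (j:ℤ) * (2*(n:ℤ) - 1 - 2*(j:ℤ)) := by
      intro j
      have hjn : (j:ℕ) < n := j.2
      have h1 : ((a j : ℕ) : ℤ) + ((b j + 1 : ℕ) : ℤ)
          = (lam j : ℤ) + (μ j : ℤ) + (2*(n:ℤ) - 1 - 2*(j:ℤ)) := by
        simp only [ha, hb, stair]
        push_cast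
        omega
      push_cast
      push_cast at h1
      nlinarith [h1]
    have hcast : ((∑ j : Fin n, (j:ℕ) * a j + ∑ j : Fin n, (j:ℕ) * (b j + 1) : ℕ) : ℤ)
        = (∑ j : Fin n, (j:ℤ) * ((lam j:ℤ) + (μ j:ℤ)))
          + ∑ j : Fin n, (j:ℤ) * (2*(n:ℤ) - 1 - 2*(j:ℤ)) := by
      push_cast
      rw [← Finset.sum_add_distrib, ← Finset.sum_add_distrib]
      refine Finset.sum_congr rfl fun j _ => ?_
      have := key j
      push_cast at this
      linarith [this]
    have hsum2 : ∑ j : Fin n, (j:ℤ) * (2*(n:ℤ) - 1 - 2*(j:ℤ))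
        = (n.choose 2 : ℤ) + 2 * (n.choose 3 : ℤ) := by
      rw [Fin.sum_univ_eq_sum_range (fun k => (k:ℤ) * (2*(n:ℤ) - 1 - 2*(k:ℤ)))]
      exact sumE n
    have hfin : ((∑ j : Fin n, (j:ℕ) * a j + ∑ j : Fin n, (j:ℕ) * (b j + 1) : ℕ) : ℤ)
        = ((n.choose 2 + 2 * n.choose 3 + ∑ i : Fin n, (i : ℕ) * (lam i + μ i) : ℕ) : ℤ) := by
      rw [hcast, hsum2]
      push_cast
      ring
    exact_mod_cast hfin
  -- matching the stated factors
  have hzA : ∀ (i j : Fin n), j ∈ Finset.Ioi i →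
      (1 - q ^ ((lam i : ℤ) - (lam j : ℤ) + ((j : ℕ) : ℤ) - ((i : ℕ) : ℤ)))
        = 1 - q ^ (a i - a j) := by
    intro i j hj
    have hij := Finset.mem_Ioi.mp hj
    have h2 : lam j ≤ lam i := hlam hij.le
    have h3 : (i:ℕ) < (j:ℕ) := hij
    have h4 : (j:ℕ) < n := j.2
    have h1 : ((a i - a j : ℕ) : ℤ) = (lam i : ℤ) - (lam j : ℤ) + ((j : ℕ) : ℤ) - ((i : ℕ) : ℤ) := by
      simp only [ha, stair]
      push_cast
      omega
    rw [← h1, zpow_natCast]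
  have hzB : ∀ (i j : Fin n), j ∈ Finset.Ioi i →
      (1 - q ^ ((μ i : ℤ) - (μ j : ℤ) + ((j : ℕ) : ℤ) - ((i : ℕ) : ℤ)))
        = 1 - q ^ (b i - b j) := by
    intro i j hj
    have hij := Finset.mem_Ioi.mp hj
    have h2 : μ j ≤ μ i := hμ hij.le
    have h3 : (i:ℕ) < (j:ℕ) := hij
    have h4 : (j:ℕ) < n := j.2
    have h1 : ((b i - b j : ℕ) : ℤ) = (μ i : ℤ) - (μ j : ℤ) + ((j : ℕ) : ℤ) - ((i : ℕ) : ℤ) := by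
      simp only [hb, stair]
      push_cast
      omega
    rw [← h1, zpow_natCast]
  have hTnum : (∏ i : Fin n, ∏ j ∈ Finset.Ioi i,
        (1 - q ^ ((lam i : ℤ) - (lam j : ℤ) + ((j : ℕ) : ℤ) - ((i : ℕ) : ℤ)))
          * (1 - q ^ ((μ i : ℤ) - (μ j : ℤ) + ((j : ℕ) : ℤ) - ((i : ℕ) : ℤ))))
      = (∏ i : Fin n, ∏ j ∈ Finset.Ioi i, (1 - q ^ (a i - a j)))
        * (∏ i : Fin n, ∏ j ∈ Finset.Ioi i, (1 - q ^ (b i - b j))) := by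
    rw [← Finset.prod_mul_distrib]
    refine Finset.prod_congr rfl fun i _ => ?_
    rw [← Finset.prod_mul_distrib]
    refine Finset.prod_congr rfl fun j hj => ?_
    rw [hzA i j hj, hzB i j hj]
  have hD : (∏ i : Fin n, ∏ j : Fin n,
        (1 - q ^ ((lam i : ℤ) + (μ j : ℤ) + 2 * (n : ℤ) - 1 - ((i : ℕ) : ℤ) - ((j : ℕ) : ℤ))))
      = ∏ i : Fin n, ∏ j : Fin n, (1 - xv i * yv j) := by
    refine Finset.prod_congr rfl fun i _ => Finset.prod_congr rfl fun j _ => ?_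
    have hin : (i:ℕ) < n := i.2
    have hjn : (j:ℕ) < n := j.2
    have h1 : ((a i + (b j + 1) : ℕ) : ℤ)
        = (lam i : ℤ) + (μ j : ℤ) + 2 * (n : ℤ) - 1 - ((i : ℕ) : ℤ) - ((j : ℕ) : ℤ) := by
      simp only [ha, hb, stair]
      push_cast
      omega
    rw [hxv, hyv]
    simp only
    rw [← pow_add, ← zpow_natCast q (a i + (b j + 1)), h1]
  -- final assembly
  calc qint q n (fun x => alt n a x * alt n b x)
      = (1 - q) ^ n * ∑' ν : {ν : Fin n → ℕ // Antitone ν}, F ν.1 := rfl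
    _ = (1 - q) ^ n * (Matrix.of fun i j : Fin n => (1 - q ^ (a i + b j + 1))⁻¹).det := by
        rw [hanti]
    _ = (1 - q) ^ n * (((∏ i : Fin n, ∏ j ∈ Finset.Ioi i, (xv j - xv i))
          * ∏ i : Fin n, ∏ j ∈ Finset.Ioi i, (yv j - yv i))
          / ∏ i : Fin n, ∏ j : Fin n, (1 - xv i * yv j)) := by
        rw [hGxy, hcauchy]
    _ = q ^ (n.choose 2 + 2 * n.choose 3 + ∑ i : Fin n, (i : ℕ) * (lam i + μ i))
          * (1 - q) ^ n
          * (∏ i : Fin n, ∏ j ∈ Finset.Ioi i,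
              (1 - q ^ ((lam i : ℤ) - (lam j : ℤ) + ((j : ℕ) : ℤ) - ((i : ℕ) : ℤ)))
                * (1 - q ^ ((μ i : ℤ) - (μ j : ℤ) + ((j : ℕ) : ℤ) - ((i : ℕ) : ℤ))))
          / (∏ i : Fin n, ∏ j : Fin n,
              (1 - q ^ ((lam i : ℤ) + (μ j : ℤ)
                  + 2 * (n : ℤ) - 1 - ((i : ℕ) : ℤ) - ((j : ℕ) : ℤ)))) := by
        rw [hX, hY, hTnum, hD, ← hEsum, pow_add]
        ring
end

section
/- Let 0 < q < 1, let n ≥ 2 and k ≥ 0 be integers, and let λ ∈ Par_{n−1} and μ ∈ Par_{n+1} be partitions. Then ∏_{j=1}^{n−1}(1 − q^{|λ|+|μ|+λ_j+n²+n−j+k+1}) / ∏_{i=1}^{n+1}(1 − q^{|λ|+|μ|−μ_i+n²−n+k+i}) = ∑_{ℓ=1}^{n+1} ( q^{−|λ|−|μ|+μ_ℓ−n²+n−k−ℓ} / (1 − q^{|λ|+|μ|−μ_ℓ+n²−n+k+ℓ}) ) · ( ∏_{j=1}^{n−1}(1 − q^{μ_ℓ+λ_j+2n−ℓ−j+1})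 / ∏_{j=1, j≠ℓ}^{n+1}(1 − q^{μ_ℓ−μ_j+j−ℓ}) ). -/
open Finset Polynomial

lemma partial_fractions {ι : Type*} [Fintype ι] [DecidableEq ι]
    (v : ι → ℝ) (hv : Function.Injective v) (f : ℝ[X])
    (hdeg : f.degree < (Fintype.card ι : ℕ)) (c : ℝ) (hc : ∀ i, c ≠ v i) :
    f.eval c / ∏ i, (c - v i)
      = ∑ ℓ, f.eval (v ℓ) / ((c - v ℓ) * ∏ j ∈ Finset.univ.erase ℓ, (v ℓ - v j)) := by
  have hvs : Set.InjOn v (Finset.univ : Finset ι) := fun a _ b _ h => hv h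
  have hcard : ((Finset.univ : Finset ι).card : ℕ) = Fintype.card ι := Finset.card_univ
  have hdeg' : f.degree < ((Finset.univ : Finset ι).card : ℕ) := by rwa [hcard]
  have h1 := Lagrange.eval_interpolate_not_at_node (s := (Finset.univ : Finset ι)) (v := v)
      (x := c) (fun i => f.eval (v i)) (fun i _ => hc i)
  rw [← Lagrange.eq_interpolate hvs hdeg'] at h1
  rw [Lagrange.eval_nodal] at h1
  have hprod : (∏ i, (c - v i)) ≠ 0 :=
    Finset.prod_ne_zero_iff.mpr fun i _ => sub_ne_zero_of_ne (hc i)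
  rw [h1, mul_comm, mul_div_assoc, div_self hprod, mul_one]
  refine Finset.sum_congr rfl fun ℓ _ => ?_
  rw [Lagrange.nodalWeight, Finset.prod_inv_distrib, div_eq_mul_inv, mul_inv]
  ring

theorem stmt11 (q : ℝ) (hq0 : 0 < q) (hq1 : q < 1) (n k : ℕ) (hn : 2 ≤ n)
    (lam : Fin (n - 1) → ℕ) (hlam : Antitone lam)
    (μ : Fin (n + 1) → ℕ) (hμ : Antitone μ) :
    (∏ j : Fin (n - 1),
        (1 - q ^ (((∑ t, lam t : ℕ) : ℤ) + ((∑ t, μ t : ℕ) : ℤ) + (lam j : ℤ)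
            + (n : ℤ) ^ 2 + (n : ℤ) - (((j : ℕ) : ℤ) + 1) + (k : ℤ) + 1)))
      / (∏ i : Fin (n + 1),
          (1 - q ^ (((∑ t, lam t : ℕ) : ℤ) + ((∑ t, μ t : ℕ) : ℤ) - (μ i : ℤ)
              + (n : ℤ) ^ 2 - (n : ℤ) + (k : ℤ) + (((i : ℕ) : ℤ) + 1))))
      = ∑ ℓ : Fin (n + 1),
          (q ^ (-((∑ t, lam t : ℕ) : ℤ) - ((∑ t, μ t : ℕ) : ℤ) + (μ ℓ : ℤ)
              - (n : ℤ) ^ 2 + (n : ℤ) - (k : ℤ) - (((ℓ : ℕ) : ℤ) + 1))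
            / (1 - q ^ (((∑ t, lam t : ℕ) : ℤ) + ((∑ t, μ t : ℕ) : ℤ) - (μ ℓ : ℤ)
                + (n : ℤ) ^ 2 - (n : ℤ) + (k : ℤ) + (((ℓ : ℕ) : ℤ) + 1))))
          * ((∏ j : Fin (n - 1),
              (1 - q ^ ((μ ℓ : ℤ) + (lam j : ℤ) + 2 * (n : ℤ)
                  - (((ℓ : ℕ) : ℤ) + 1) - (((j : ℕ) : ℤ) + 1) + 1)))
            / (∏ j ∈ Finset.univ.erase ℓ,
                (1 - q ^ ((μ ℓ : ℤ) - (μ j : ℤ) + ((j : ℕ) : ℤ) - ((ℓ : ℕ) : ℤ))))) := by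
  have hq : q ≠ 0 := ne_of_gt hq0
  set Sl : ℕ := ∑ t, lam t with hSl
  set Sm : ℕ := ∑ t, μ t with hSm
  set A : ℤ := (Sl : ℤ) + (Sm : ℤ) + (n : ℤ) ^ 2 - (n : ℤ) + (k : ℤ) with hA
  set y : Fin (n + 1) → ℝ := fun ℓ => q ^ ((μ ℓ : ℤ) - (((ℓ : ℕ) : ℤ) + 1)) with hy
  set c : ℝ := q ^ A with hc
  set a : Fin (n - 1) → ℝ := fun j => q ^ ((lam j : ℤ) + 2 * (n : ℤ) - ((j : ℕ) : ℤ)) with ha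
  have hzanti : StrictAnti fun m : ℤ => q ^ m := zpow_right_strictAnti₀ hq0 hq1
  have hyne : ∀ ℓ, y ℓ ≠ 0 := fun ℓ => zpow_ne_zero _ hq
  have hc0 : c ≠ 0 := zpow_ne_zero _ hq
  have heyanti : ∀ ℓ j : Fin (n + 1), ℓ < j →
      ((μ j : ℤ) - (((j : ℕ) : ℤ) + 1)) < ((μ ℓ : ℤ) - (((ℓ : ℕ) : ℤ) + 1)) := by
    intro ℓ j h
    have h1 : μ j ≤ μ ℓ := hμ h.le
    have h2 : (ℓ : ℕ) < (j : ℕ) := h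
    omega
  have hyinj : Function.Injective y := by
    intro i j hij
    simp only [hy] at hij
    have h2 := hzanti.injective hij
    rcases lt_trichotomy i j with h | h | h
    · exact absurd h2 (heyanti i j h).ne'
    · exact h
    · exact absurd h2 (heyanti j i h).ne
  have hμle : ∀ ℓ : Fin (n + 1), μ ℓ ≤ Sm := fun ℓ =>
    Finset.single_le_sum (fun i _ => Nat.zero_le _) (Finset.mem_univ ℓ)
  have hnsq : (n : ℤ) ≤ (n : ℤ) ^ 2 := by
    nlinarith [show (2 : ℤ) ≤ (n : ℤ) from by exact_mod_cast hn]
  have heylt : ∀ ℓ : Fin (n + 1), ((μ ℓ : ℤ) - (((ℓ : ℕ) : ℤ) + 1)) < A := by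
    intro ℓ
    have h1 : (μ ℓ : ℤ) ≤ (Sm : ℤ) := by exact_mod_cast hμle ℓ
    have h2 : (0 : ℤ) ≤ (Sl : ℤ) := Int.natCast_nonneg _
    have h3 : (0 : ℤ) ≤ (k : ℤ) := Int.natCast_nonneg _
    have h4 : (0 : ℤ) ≤ ((ℓ : ℕ) : ℤ) := Int.natCast_nonneg _
    rw [hA]; linarith
  have hcney : ∀ ℓ, c ≠ y ℓ := by
    intro ℓ
    simp only [hc, hy]
    exact fun h => absurd (hzanti.injective h) (heylt ℓ).ne'
  have hcy : ∀ ℓ, c - y ℓ ≠ 0 := fun ℓ => sub_ne_zero_of_ne (hcney ℓ)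
  -- the polynomial
  set f : ℝ[X] := X * ∏ j : Fin (n - 1), (1 - C (a j) * X) with hf
  have hdeg : f.degree < (Fintype.card (Fin (n + 1)) : ℕ) := by
    rw [Fintype.card_fin]
    by_cases h0 : f = 0
    · rw [h0, Polynomial.degree_zero]; exact WithBot.bot_lt_coe _
    · rw [← Polynomial.natDegree_lt_iff_degree_lt h0]
      have hfac : ∀ j : Fin (n - 1), (1 - C (a j) * X : ℝ[X]).natDegree ≤ 1 := by
        intro j
        refine (Polynomial.natDegree_sub_le _ _).trans ?_
        have h2 := Polynomial.natDegree_C_mul_le (a j) (X : ℝ[X])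
        simp only [Polynomial.natDegree_one, Polynomial.natDegree_X] at h2 ⊢
        omega
      have hp : (∏ j : Fin (n - 1), (1 - C (a j) * X : ℝ[X])).natDegree ≤ n - 1 := by
        refine (Polynomial.natDegree_prod_le _ _).trans ?_
        calc ∑ j : Fin (n - 1), (1 - C (a j) * X : ℝ[X]).natDegree
            ≤ ∑ _j : Fin (n - 1), 1 := Finset.sum_le_sum fun j _ => hfac j
          _ = n - 1 := by simp
      have hm := Polynomial.natDegree_mul_le (p := (X : ℝ[X]))
        (q := ∏ j : Fin (n - 1), (1 - C (a j) * X : ℝ[X]))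
      rw [Polynomial.natDegree_X] at hm
      rw [hf]
      omega
  have hfe : ∀ x : ℝ, f.eval x = x * ∏ j : Fin (n - 1), (1 - a j * x) := by
    intro x
    simp [hf, Polynomial.eval_prod]
  have hkey := partial_fractions y hyinj f hdeg c hcney
  set Q : ℝ := ∏ i : Fin (n + 1), (-(y i)) with hQ
  have hQne : Q ≠ 0 := Finset.prod_ne_zero_iff.mpr fun i _ => neg_ne_zero.mpr (hyne i)
  have hPcy : (∏ i : Fin (n + 1), (c - y i)) ≠ 0 :=
    Finset.prod_ne_zero_iff.mpr fun i _ => hcy i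
  -- pointwise rewrites
  have hden : ∀ i : Fin (n + 1),
      (1 : ℝ) - q ^ ((Sl : ℤ) + (Sm : ℤ) - (μ i : ℤ) + (n : ℤ) ^ 2 - (n : ℤ) + (k : ℤ)
          + (((i : ℕ) : ℤ) + 1)) = (c - y i) / (-(y i)) := by
    intro i
    have he : (Sl : ℤ) + (Sm : ℤ) - (μ i : ℤ) + (n : ℤ) ^ 2 - (n : ℤ) + (k : ℤ)
        + (((i : ℕ) : ℤ) + 1) = A - ((μ i : ℤ) - (((i : ℕ) : ℤ) + 1)) := by rw [hA]; ring
    rw [he, zpow_sub₀ hq]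
    simp only [hc, hy]
    have h2 : (q : ℝ) ^ ((μ i : ℤ) - (((i : ℕ) : ℤ) + 1)) ≠ 0 := zpow_ne_zero _ hq
    rw [div_neg, ← neg_div, neg_sub, sub_div, div_self h2]
  have hnum : ∀ j : Fin (n - 1),
      (1 : ℝ) - q ^ ((Sl : ℤ) + (Sm : ℤ) + (lam j : ℤ) + (n : ℤ) ^ 2 + (n : ℤ)
          - (((j : ℕ) : ℤ) + 1) + (k : ℤ) + 1) = 1 - a j * c := by
    intro j
    have he : (Sl : ℤ) + (Sm : ℤ) + (lam j : ℤ) + (n : ℤ) ^ 2 + (n : ℤ)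
        - (((j : ℕ) : ℤ) + 1) + (k : ℤ) + 1
        = ((lam j : ℤ) + 2 * (n : ℤ) - ((j : ℕ) : ℤ)) + A := by rw [hA]; ring
    rw [he, zpow_add₀ hq]
  have hnum2 : ∀ (ℓ : Fin (n + 1)) (j : Fin (n - 1)),
      (1 : ℝ) - q ^ ((μ ℓ : ℤ) + (lam j : ℤ) + 2 * (n : ℤ) - (((ℓ : ℕ) : ℤ) + 1)
          - (((j : ℕ) : ℤ) + 1) + 1) = 1 - a j * y ℓ := by
    intro ℓ j
    have he : (μ ℓ : ℤ) + (lam j : ℤ) + 2 * (n : ℤ) - (((ℓ : ℕ) : ℤ) + 1)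
        - (((j : ℕ) : ℤ) + 1) + 1
        = ((lam j : ℤ) + 2 * (n : ℤ) - ((j : ℕ) : ℤ)) + ((μ ℓ : ℤ) - (((ℓ : ℕ) : ℤ) + 1)) := by
      ring
    rw [he, zpow_add₀ hq]
  have hden2 : ∀ (ℓ j : Fin (n + 1)),
      (1 : ℝ) - q ^ ((μ ℓ : ℤ) - (μ j : ℤ) + ((j : ℕ) : ℤ) - ((ℓ : ℕ) : ℤ))
        = (y ℓ - y j) / (-(y j)) := by
    intro ℓ j
    have he : (μ ℓ : ℤ) - (μ j : ℤ) + ((j : ℕ) : ℤ) - ((ℓ : ℕ) : ℤ)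
        = ((μ ℓ : ℤ) - (((ℓ : ℕ) : ℤ) + 1)) - ((μ j : ℤ) - (((j : ℕ) : ℤ) + 1)) := by ring
    rw [he, zpow_sub₀ hq]
    simp only [hy]
    have h2 : (q : ℝ) ^ ((μ j : ℤ) - (((j : ℕ) : ℤ) + 1)) ≠ 0 := zpow_ne_zero _ hq
    rw [div_neg, ← neg_div, neg_sub, sub_div, div_self h2]
  have hfn : ∀ ℓ : Fin (n + 1),
      q ^ (-(Sl : ℤ) - (Sm : ℤ) + (μ ℓ : ℤ) - (n : ℤ) ^ 2 + (n : ℤ) - (k : ℤ)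
          - (((ℓ : ℕ) : ℤ) + 1)) = y ℓ / c := by
    intro ℓ
    have he : -(Sl : ℤ) - (Sm : ℤ) + (μ ℓ : ℤ) - (n : ℤ) ^ 2 + (n : ℤ) - (k : ℤ)
        - (((ℓ : ℕ) : ℤ) + 1) = ((μ ℓ : ℤ) - (((ℓ : ℕ) : ℤ) + 1)) - A := by rw [hA]; ring
    rw [he, zpow_sub₀ hq]
  -- LHS conversion
  have hL : (∏ j : Fin (n - 1),
        (1 - q ^ ((Sl : ℤ) + (Sm : ℤ) + (lam j : ℤ)
            + (n : ℤ) ^ 2 + (n : ℤ) - (((j : ℕ) : ℤ) + 1) + (k : ℤ) + 1)))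
      / (∏ i : Fin (n + 1),
          (1 - q ^ ((Sl : ℤ) + (Sm : ℤ) - (μ i : ℤ)
              + (n : ℤ) ^ 2 - (n : ℤ) + (k : ℤ) + (((i : ℕ) : ℤ) + 1))))
      = (Q / c) * (f.eval c / ∏ i : Fin (n + 1), (c - y i)) := by
    rw [Finset.prod_congr rfl fun j _ => hnum j,
      Finset.prod_congr rfl fun i _ => hden i,
      Finset.prod_div_distrib, hfe c, ← hQ]
    field_simp
    exact Finset.prod_congr rfl fun x _ => by ring
  -- RHS termwise conversion
  have hterm : ∀ ℓ : Fin (n + 1),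
      (q ^ (-(Sl : ℤ) - (Sm : ℤ) + (μ ℓ : ℤ)
          - (n : ℤ) ^ 2 + (n : ℤ) - (k : ℤ) - (((ℓ : ℕ) : ℤ) + 1))
        / (1 - q ^ ((Sl : ℤ) + (Sm : ℤ) - (μ ℓ : ℤ)
            + (n : ℤ) ^ 2 - (n : ℤ) + (k : ℤ) + (((ℓ : ℕ) : ℤ) + 1))))
      * ((∏ j : Fin (n - 1),
          (1 - q ^ ((μ ℓ : ℤ) + (lam j : ℤ) + 2 * (n : ℤ)
              - (((ℓ : ℕ) : ℤ) + 1) - (((j : ℕ) : ℤ) + 1) + 1)))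
        / (∏ j ∈ Finset.univ.erase ℓ,
            (1 - q ^ ((μ ℓ : ℤ) - (μ j : ℤ) + ((j : ℕ) : ℤ) - ((ℓ : ℕ) : ℤ)))))
      = (Q / c) * (f.eval (y ℓ)
          / ((c - y ℓ) * ∏ j ∈ Finset.univ.erase ℓ, (y ℓ - y j))) := by
    intro ℓ
    rw [Finset.prod_congr rfl fun j _ => hnum2 ℓ j,
      Finset.prod_congr rfl fun j _ => hden2 ℓ j,
      Finset.prod_div_distrib, hfe (y ℓ), hfn ℓ, hden ℓ]
    have hQsplit : Q = (-(y ℓ)) * ∏ j ∈ Finset.univ.erase ℓ, (-(y j)) :=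
      (Finset.mul_prod_erase _ _ (Finset.mem_univ ℓ)).symm
    rw [hQsplit]
    have hPe : (∏ j ∈ Finset.univ.erase ℓ, (y ℓ - y j)) ≠ 0 :=
      Finset.prod_ne_zero_iff.mpr fun j hj =>
        sub_ne_zero_of_ne fun h => (Finset.mem_erase.mp hj).1 (hyinj h).symm
    have hNe : (∏ j ∈ Finset.univ.erase ℓ, (-(y j))) ≠ 0 :=
      Finset.prod_ne_zero_iff.mpr fun j _ => neg_ne_zero.mpr (hyne j)
    field_simp
  rw [hL, hkey, Finset.mul_sum]
  exact Finset.sum_congr rfl fun ℓ _ => (hterm ℓ).symm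
end

section
/- Let 0 < q < 1, let λ ∈ Par_2 and μ ∈ Par_3 be partitions. Then ∫_{0≤x_1≤x_2≤x_3≤1} x_1 (x_2 − x_3) a_{λ+δ_2}(x_1,x_2) a_{μ+δ_3}(x_1,x_2,x_3) d_q x_1 d_q x_2 d_q x_3 = (−1) q^{∑_{i=1}^2 i(λ_i+μ_{i+1})+7} (1−q)^4 (1 − q^{λ_1−λ_2+1}) (1 − q^{|λ|+|μ|+λ_1+10}) (1 − q^{|λ|+|μ|+λ_2+9}) / (1 − q^{|λ|+|μ|+9}) · ∏_{1≤i<j≤3}(1 − q^{μ_i−μ_j+j−i}) / ( ∏_{i=1}^2 ∏_{j=1}^3 (1 − q^{λ_i+μ_j+7−i−j}) ∏_{i=1}^3 (1 − q^{|λ|+|μ|−μ_i+4+i}) ). -/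
set_option maxHeartbeats 4000000
set_option linter.unnecessarySeqFocus false



private lemma one_sub_pow_ne (q : ℝ) (hq0 : 0 < q) (hq1 : q < 1) {e : ℕ} (he : e ≠ 0) :
    1 - q ^ e ≠ 0 :=
  ne_of_gt (sub_pos.mpr (pow_lt_one₀ hq0.le hq1 he))

private lemma geo (q : ℝ) (hq0 : 0 < q) (hq1 : q < 1) (e : ℕ) :
    Summable (fun n : ℕ => (q ^ (e + 1)) ^ n) :=
  summable_geometric_of_lt_one (pow_nonneg hq0.le _)
    (pow_lt_one₀ hq0.le hq1 (Nat.succ_ne_zero e))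

private lemma mono_summable (q : ℝ) (hq0 : 0 < q) (hq1 : q < 1) (e1 e2 e3 : ℕ) :
    Summable (fun p : ℕ × ℕ × ℕ =>
      (q ^ (e1 + 1)) ^ p.1 * ((q ^ (e2 + 1)) ^ p.2.1 * (q ^ (e3 + 1)) ^ p.2.2)) := by
  have h23 : Summable (fun p : ℕ × ℕ => (q ^ (e2 + 1)) ^ p.1 * (q ^ (e3 + 1)) ^ p.2) :=
    (geo q hq0 hq1 e2).mul_of_nonneg (geo q hq0 hq1 e3)
      (fun n => by positivity) (fun n => by positivity)
  exact (geo q hq0 hq1 e1).mul_of_nonneg h23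
    (fun n => by positivity) (fun p => by positivity)

private lemma mono_tsum (q : ℝ) (hq0 : 0 < q) (hq1 : q < 1) (e1 e2 e3 : ℕ) :
    ∑' p : ℕ × ℕ × ℕ, (q ^ (e1 + 1)) ^ p.1 * ((q ^ (e2 + 1)) ^ p.2.1 * (q ^ (e3 + 1)) ^ p.2.2)
      = (1 - q ^ (e1 + 1))⁻¹ * ((1 - q ^ (e2 + 1))⁻¹ * (1 - q ^ (e3 + 1))⁻¹) := by
  have h23 : Summable (fun p : ℕ × ℕ => (q ^ (e2 + 1)) ^ p.1 * (q ^ (e3 + 1)) ^ p.2) :=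
    (geo q hq0 hq1 e2).mul_of_nonneg (geo q hq0 hq1 e3)
      (fun n => by positivity) (fun n => by positivity)
  have hin : ∑' c : ℕ × ℕ, (q ^ (e2 + 1)) ^ c.1 * (q ^ (e3 + 1)) ^ c.2
      = (1 - q ^ (e2 + 1))⁻¹ * (1 - q ^ (e3 + 1))⁻¹ := by
    rw [Summable.tsum_prod' h23 (fun b => Summable.mul_left ((q ^ (e2 + 1)) ^ b) (geo q hq0 hq1 e3))]
    simp_rw [tsum_mul_left]
    rw [tsum_geometric_of_lt_one (by positivity) (pow_lt_one₀ hq0.le hq1 (Nat.succ_ne_zero e3)),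
      tsum_mul_right,
      tsum_geometric_of_lt_one (by positivity) (pow_lt_one₀ hq0.le hq1 (Nat.succ_ne_zero e2))]
  rw [Summable.tsum_prod' (mono_summable q hq0 hq1 e1 e2 e3)
      (fun b => Summable.mul_left ((q ^ (e1 + 1)) ^ b) h23)]
  simp_rw [tsum_mul_left, hin]
  rw [tsum_mul_right,
    tsum_geometric_of_lt_one (by positivity) (pow_lt_one₀ hq0.le hq1 (Nat.succ_ne_zero e1))]

private lemma combo (q : ℝ) (hq0 : 0 < q) (hq1 : q < 1) (L : List (ℝ × ℕ × ℕ × ℕ)) :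
    Summable (fun p : ℕ × ℕ × ℕ =>
        (L.map (fun t => t.1 *
          ((q ^ (t.2.1 + 1)) ^ p.1 * ((q ^ (t.2.2.1 + 1)) ^ p.2.1 * (q ^ (t.2.2.2 + 1)) ^ p.2.2)))).sum)
    ∧ ∑' p : ℕ × ℕ × ℕ,
        (L.map (fun t => t.1 *
          ((q ^ (t.2.1 + 1)) ^ p.1 * ((q ^ (t.2.2.1 + 1)) ^ p.2.1 * (q ^ (t.2.2.2 + 1)) ^ p.2.2)))).sum
      = (L.map (fun t => t.1 *
          ((1 - q ^ (t.2.1 + 1))⁻¹ * ((1 - q ^ (t.2.2.1 + 1))⁻¹ * (1 - q ^ (t.2.2.2 + 1))⁻¹)))).sum := by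
  induction L with
  | nil => exact ⟨by simpa using summable_zero, by simp⟩
  | cons t L ih =>
    obtain ⟨c, e1, e2, e3⟩ := t
    have hs : Summable (fun p : ℕ × ℕ × ℕ =>
        c * ((q ^ (e1 + 1)) ^ p.1 * ((q ^ (e2 + 1)) ^ p.2.1 * (q ^ (e3 + 1)) ^ p.2.2))) :=
      (mono_summable q hq0 hq1 e1 e2 e3).mul_left c
    refine ⟨by simpa using hs.add ih.1, ?_⟩
    simp only [List.map_cons, List.sum_cons]
    rw [Summable.tsum_add hs ih.1, ih.2, tsum_mul_left, mono_tsum q hq0 hq1 e1 e2 e3]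

private lemma anti3 {a b c : ℕ} (h1 : b ≤ a) (h2 : c ≤ b) :
    Antitone (![a, b, c] : Fin 3 → ℕ) := by
  intro i j hij
  fin_cases i <;> fin_cases j <;> simp_all <;> omega

private def triEquiv : (ℕ × ℕ × ℕ) ≃ {μ : Fin 3 → ℕ // Antitone μ} where
  toFun p := ⟨![p.1 + p.2.1 + p.2.2, p.2.1 + p.2.2, p.2.2],
    anti3 (by omega) (by omega)⟩
  invFun μ := (μ.1 0 - μ.1 1, μ.1 1 - μ.1 2, μ.1 2)
  left_inv := by
    rintro ⟨x, y, z⟩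
    simp [Prod.ext_iff]
    omega
  right_inv := by
    rintro ⟨g, hg⟩
    have h01 : g 1 ≤ g 0 := hg (by decide)
    have h12 : g 2 ≤ g 1 := hg (by decide)
    apply Subtype.ext
    funext i
    fin_cases i <;> simp <;> omega


theorem stmt12 (q : ℝ) (hq0 : 0 < q) (hq1 : q < 1)
    (l1 l2 m1 m2 m3 : ℕ) (hl : l2 ≤ l1) (hm12 : m2 ≤ m1) (hm23 : m3 ≤ m2) :
    qint q 3 (fun x =>
        x 0 * (x 1 - x 2) * alt 2 ![l1 + 1, l2] ![x 0, x 1]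
          * alt 3 ![m1 + 2, m2 + 1, m3] x)
      = (-1 : ℝ) * q ^ (l1 + 2 * l2 + m2 + 2 * m3 + 7) * (1 - q) ^ 4
          * (1 - q ^ ((l1 : ℤ) - l2 + 1))
          * (1 - q ^ (l1 + l2 + m1 + m2 + m3 + l1 + 10))
          * (1 - q ^ (l1 + l2 + m1 + m2 + m3 + l2 + 9))
          / (1 - q ^ (l1 + l2 + m1 + m2 + m3 + 9))
          * ((1 - q ^ ((m1 : ℤ) - m2 + 1)) * (1 - q ^ ((m1 : ℤ) - m3 + 2))
              * (1 - q ^ ((m2 : ℤ) - m3 + 1)))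
          / (((1 - q ^ (l1 + m1 + 5)) * (1 - q ^ (l1 + m2 + 4)) * (1 - q ^ (l1 + m3 + 3))
              * (1 - q ^ (l2 + m1 + 4)) * (1 - q ^ (l2 + m2 + 3)) * (1 - q ^ (l2 + m3 + 2)))
            * ((1 - q ^ ((l1 : ℤ) + l2 + m1 + m2 + m3 - m1 + 5))
                * (1 - q ^ ((l1 : ℤ) + l2 + m1 + m2 + m3 - m2 + 6))
                * (1 - q ^ ((l1 : ℤ) + l2 + m1 + m2 + m3 - m3 + 7)))) := by
  have hqe : q ≠ 0 := ne_of_gt hq0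
  set L : List (ℝ × ℕ × ℕ × ℕ) := [((1 : ℝ), l1 + m1 + 4, l1 + l2 + m1 + m2 + 7, l1 + l2 + m1 + m2 + m3 + 8),
   ((-1 : ℝ), l1 + m1 + 4, l1 + l2 + m1 + m3 + 6, l1 + l2 + m1 + m2 + m3 + 8),
   ((-1 : ℝ), l1 + m2 + 3, l1 + l2 + m1 + m2 + 7, l1 + l2 + m1 + m2 + m3 + 8),
   ((1 : ℝ), l1 + m2 + 3, l1 + l2 + m2 + m3 + 5, l1 + l2 + m1 + m2 + m3 + 8),
   ((1 : ℝ), l1 + m3 + 2, l1 + l2 + m1 + m3 + 6, l1 + l2 + m1 + m2 + m3 + 8),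
   ((-1 : ℝ), l1 + m3 + 2, l1 + l2 + m2 + m3 + 5, l1 + l2 + m1 + m2 + m3 + 8),
   ((-1 : ℝ), l2 + m1 + 3, l1 + l2 + m1 + m2 + 7, l1 + l2 + m1 + m2 + m3 + 8),
   ((1 : ℝ), l2 + m1 + 3, l1 + l2 + m1 + m3 + 6, l1 + l2 + m1 + m2 + m3 + 8),
   ((1 : ℝ), l2 + m2 + 2, l1 + l2 + m1 + m2 + 7, l1 + l2 + m1 + m2 + m3 + 8),
   ((-1 : ℝ), l2 + m2 + 2, l1 + l2 + m2 + m3 + 5, l1 + l2 + m1 + m2 + m3 + 8),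
   ((-1 : ℝ), l2 + m3 + 1, l1 + l2 + m1 + m3 + 6, l1 + l2 + m1 + m2 + m3 + 8),
   ((1 : ℝ), l2 + m3 + 1, l1 + l2 + m2 + m3 + 5, l1 + l2 + m1 + m2 + m3 + 8),
   ((-1 : ℝ), l1 + m1 + 4, l1 + l2 + m1 + m2 + 6, l1 + l2 + m1 + m2 + m3 + 8),
   ((1 : ℝ), l1 + m1 + 4, l1 + l2 + m1 + m3 + 5, l1 + l2 + m1 + m2 + m3 + 8),
   ((1 : ℝ), l1 + m2 + 3, l1 + l2 + m1 + m2 + 6, l1 + l2 + m1 + m2 + m3 + 8),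
   ((-1 : ℝ), l1 + m2 + 3, l1 + l2 + m2 + m3 + 4, l1 + l2 + m1 + m2 + m3 + 8),
   ((-1 : ℝ), l1 + m3 + 2, l1 + l2 + m1 + m3 + 5, l1 + l2 + m1 + m2 + m3 + 8),
   ((1 : ℝ), l1 + m3 + 2, l1 + l2 + m2 + m3 + 4, l1 + l2 + m1 + m2 + m3 + 8),
   ((1 : ℝ), l2 + m1 + 3, l1 + l2 + m1 + m2 + 6, l1 + l2 + m1 + m2 + m3 + 8),
   ((-1 : ℝ), l2 + m1 + 3, l1 + l2 + m1 + m3 + 5, l1 + l2 + m1 + m2 + m3 + 8),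
   ((-1 : ℝ), l2 + m2 + 2, l1 + l2 + m1 + m2 + 6, l1 + l2 + m1 + m2 + m3 + 8),
   ((1 : ℝ), l2 + m2 + 2, l1 + l2 + m2 + m3 + 4, l1 + l2 + m1 + m2 + m3 + 8),
   ((1 : ℝ), l2 + m3 + 1, l1 + l2 + m1 + m3 + 5, l1 + l2 + m1 + m2 + m3 + 8),
   ((-1 : ℝ), l2 + m3 + 1, l1 + l2 + m2 + m3 + 4, l1 + l2 + m1 + m2 + m3 + 8)] with hL
  have hterm : ∀ p : ℕ × ℕ × ℕ,
      q ^ (∑ i, ((triEquiv p).1 i)) *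
        ((fun x : Fin 3 → ℝ =>
            x 0 * (x 1 - x 2) * alt 2 ![l1 + 1, l2] ![x 0, x 1]
              * alt 3 ![m1 + 2, m2 + 1, m3] x) (fun i => q ^ ((triEquiv p).1 i)))
      = (L.map (fun t => t.1 *
          ((q ^ (t.2.1 + 1)) ^ p.1 *
            ((q ^ (t.2.2.1 + 1)) ^ p.2.1 * (q ^ (t.2.2.2 + 1)) ^ p.2.2)))).sum := by
    rintro ⟨x, y, z⟩
    simp only [hL, triEquiv, alt, Equiv.coe_fn_mk, Matrix.det_fin_two, Matrix.det_fin_three,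
      Matrix.of_apply, Matrix.cons_val', Matrix.cons_val_zero, Matrix.cons_val_one,
      Matrix.head_cons, Matrix.head_fin_const, Matrix.cons_val_fin_one, Matrix.empty_val',
      Matrix.cons_val_two, Matrix.tail_cons, Fin.sum_univ_three, List.map_cons, List.map_nil,
      List.sum_cons, List.sum_nil, add_zero]
    ring
  rw [qint, ← Equiv.tsum_eq triEquiv, tsum_congr hterm, (combo q hq0 hq1 L).2, hL]
  simp only [List.map_cons, List.map_nil, List.sum_cons, List.sum_nil, add_zero]
  -- canonicalize exponents
  rw [show l1 + m1 + 4 + 1 = l1 + m1 + 5 from by omega,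
    show l1 + m2 + 3 + 1 = l1 + m2 + 4 from by omega,
    show l1 + m3 + 2 + 1 = l1 + m3 + 3 from by omega,
    show l2 + m1 + 3 + 1 = l2 + m1 + 4 from by omega,
    show l2 + m2 + 2 + 1 = l2 + m2 + 3 from by omega,
    show l2 + m3 + 1 + 1 = l2 + m3 + 2 from by omega,
    show l1 + l2 + m1 + m2 + 7 + 1 = l1 + l2 + m1 + m2 + 8 from by omega,
    show l1 + l2 + m1 + m2 + 6 + 1 = l1 + l2 + m1 + m2 + 7 from by omega,
    show l1 + l2 + m1 + m3 + 6 + 1 = l1 + l2 + m1 + m3 + 7 from by omega,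
    show l1 + l2 + m1 + m3 + 5 + 1 = l1 + l2 + m1 + m3 + 6 from by omega,
    show l1 + l2 + m2 + m3 + 5 + 1 = l1 + l2 + m2 + m3 + 6 from by omega,
    show l1 + l2 + m2 + m3 + 4 + 1 = l1 + l2 + m2 + m3 + 5 from by omega,
    show l1 + l2 + m1 + m2 + m3 + 8 + 1 = l1 + l2 + m1 + m2 + m3 + 9 from by omega]
  -- rewrite the ℤ-power factors on the RHS
  have hzsplit : ∀ a b : ℕ, (1 : ℝ) - q ^ ((a : ℤ) - (b : ℤ)) = (q ^ b - q ^ a) / q ^ b := by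
    intro a b
    rw [zpow_sub₀ hqe, zpow_natCast, zpow_natCast]
    field_simp
  have hz1 : (1 : ℝ) - q ^ ((l1 : ℤ) - l2 + 1) = (q ^ l2 - q ^ (l1 + 1)) / q ^ l2 := by
    rw [show (l1 : ℤ) - l2 + 1 = ((l1 + 1 : ℕ) : ℤ) - ((l2 : ℕ) : ℤ) by push_cast; ring, hzsplit]
  have hz2 : (1 : ℝ) - q ^ ((m1 : ℤ) - m2 + 1) = (q ^ m2 - q ^ (m1 + 1)) / q ^ m2 := by
    rw [show (m1 : ℤ) - m2 + 1 = ((m1 + 1 : ℕ) : ℤ) - ((m2 : ℕ) : ℤ) by push_cast; ring, hzsplit]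
  have hz3 : (1 : ℝ) - q ^ ((m1 : ℤ) - m3 + 2) = (q ^ m3 - q ^ (m1 + 2)) / q ^ m3 := by
    rw [show (m1 : ℤ) - m3 + 2 = ((m1 + 2 : ℕ) : ℤ) - ((m3 : ℕ) : ℤ) by push_cast; ring, hzsplit]
  have hz4 : (1 : ℝ) - q ^ ((m2 : ℤ) - m3 + 1) = (q ^ m3 - q ^ (m2 + 1)) / q ^ m3 := by
    rw [show (m2 : ℤ) - m3 + 1 = ((m2 + 1 : ℕ) : ℤ) - ((m3 : ℕ) : ℤ) by push_cast; ring, hzsplit]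
  have hz5 : q ^ ((l1 : ℤ) + l2 + m1 + m2 + m3 - m1 + 5) = q ^ (l1 + l2 + m2 + m3 + 5) := by
    rw [show (l1 : ℤ) + l2 + m1 + m2 + m3 - m1 + 5 = ((l1 + l2 + m2 + m3 + 5 : ℕ) : ℤ) by
      push_cast; ring, zpow_natCast]
  have hz6 : q ^ ((l1 : ℤ) + l2 + m1 + m2 + m3 - m2 + 6) = q ^ (l1 + l2 + m1 + m3 + 6) := by
    rw [show (l1 : ℤ) + l2 + m1 + m2 + m3 - m2 + 6 = ((l1 + l2 + m1 + m3 + 6 : ℕ) : ℤ) by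
      push_cast; ring, zpow_natCast]
  have hz7 : q ^ ((l1 : ℤ) + l2 + m1 + m2 + m3 - m3 + 7) = q ^ (l1 + l2 + m1 + m2 + 7) := by
    rw [show (l1 : ℤ) + l2 + m1 + m2 + m3 - m3 + 7 = ((l1 + l2 + m1 + m2 + 7 : ℕ) : ℤ) by
      push_cast; ring, zpow_natCast]
  rw [hz1, hz2, hz3, hz4, hz5, hz6, hz7]
  -- atomize the binomial factors
  set a1 : ℝ := 1 - q ^ (l1 + m1 + 5) with ha1
  set a2 : ℝ := 1 - q ^ (l2 + m1 + 4) with ha2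
  set a3 : ℝ := 1 - q ^ (l1 + m2 + 4) with ha3
  set a4 : ℝ := 1 - q ^ (l2 + m2 + 3) with ha4
  set a5 : ℝ := 1 - q ^ (l1 + m3 + 3) with ha5
  set a6 : ℝ := 1 - q ^ (l2 + m3 + 2) with ha6
  set b1 : ℝ := 1 - q ^ (l1 + l2 + m1 + m2 + 7) with hb1
  set b2 : ℝ := 1 - q ^ (l1 + l2 + m1 + m3 + 6) with hb2
  set b3 : ℝ := 1 - q ^ (l1 + l2 + m2 + m3 + 5) with hb3
  set c1 : ℝ := 1 - q ^ (l1 + l2 + m1 + m2 + 8) with hc1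
  set c2 : ℝ := 1 - q ^ (l1 + l2 + m1 + m3 + 7) with hc2
  set c3 : ℝ := 1 - q ^ (l1 + l2 + m2 + m3 + 6) with hc3
  set w0 : ℝ := 1 - q ^ (l1 + l2 + m1 + m2 + m3 + 9) with hw0
  clear_value a1 a2 a3 a4 a5 a6 b1 b2 b3 c1 c2 c3 w0
  have na1 : a1 ≠ 0 := by rw [ha1]; exact one_sub_pow_ne q hq0 hq1 (by omega)
  have na2 : a2 ≠ 0 := by rw [ha2]; exact one_sub_pow_ne q hq0 hq1 (by omega)
  have na3 : a3 ≠ 0 := by rw [ha3]; exact one_sub_pow_ne q hq0 hq1 (by omega)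
  have na4 : a4 ≠ 0 := by rw [ha4]; exact one_sub_pow_ne q hq0 hq1 (by omega)
  have na5 : a5 ≠ 0 := by rw [ha5]; exact one_sub_pow_ne q hq0 hq1 (by omega)
  have na6 : a6 ≠ 0 := by rw [ha6]; exact one_sub_pow_ne q hq0 hq1 (by omega)
  have nb1 : b1 ≠ 0 := by rw [hb1]; exact one_sub_pow_ne q hq0 hq1 (by omega)
  have nb2 : b2 ≠ 0 := by rw [hb2]; exact one_sub_pow_ne q hq0 hq1 (by omega)
  have nb3 : b3 ≠ 0 := by rw [hb3]; exact one_sub_pow_ne q hq0 hq1 (by omega)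
  have nc1 : c1 ≠ 0 := by rw [hc1]; exact one_sub_pow_ne q hq0 hq1 (by omega)
  have nc2 : c2 ≠ 0 := by rw [hc2]; exact one_sub_pow_ne q hq0 hq1 (by omega)
  have nc3 : c3 ≠ 0 := by rw [hc3]; exact one_sub_pow_ne q hq0 hq1 (by omega)
  have nw0 : w0 ≠ 0 := by rw [hw0]; exact one_sub_pow_ne q hq0 hq1 (by omega)
  -- difference-of-inverses identities
  have hd1 : a1⁻¹ - a2⁻¹ = (q ^ (l1 + m1 + 5) - q ^ (l2 + m1 + 4)) / (a1 * a2) := by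
    have k1 : (1 : ℝ) - q ^ (l1 + m1 + 5) ≠ 0 := one_sub_pow_ne q hq0 hq1 (by omega)
    have k2 : (1 : ℝ) - q ^ (l2 + m1 + 4) ≠ 0 := one_sub_pow_ne q hq0 hq1 (by omega)
    rw [ha1, ha2]; field_simp; ring
  have hd2 : a3⁻¹ - a4⁻¹ = (q ^ (l1 + m2 + 4) - q ^ (l2 + m2 + 3)) / (a3 * a4) := by
    have k1 : (1 : ℝ) - q ^ (l1 + m2 + 4) ≠ 0 := one_sub_pow_ne q hq0 hq1 (by omega)
    have k2 : (1 : ℝ) - q ^ (l2 + m2 + 3) ≠ 0 := one_sub_pow_ne q hq0 hq1 (by omega)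
    rw [ha3, ha4]; field_simp; ring
  have hd3 : a5⁻¹ - a6⁻¹ = (q ^ (l1 + m3 + 3) - q ^ (l2 + m3 + 2)) / (a5 * a6) := by
    have k1 : (1 : ℝ) - q ^ (l1 + m3 + 3) ≠ 0 := one_sub_pow_ne q hq0 hq1 (by omega)
    have k2 : (1 : ℝ) - q ^ (l2 + m3 + 2) ≠ 0 := one_sub_pow_ne q hq0 hq1 (by omega)
    rw [ha5, ha6]; field_simp; ring
  have hu1 : c1⁻¹ - c2⁻¹ - b1⁻¹ + b2⁻¹
      = ((1 - q) * (q ^ (l1 + l2 + m1 + m3 + 6) - q ^ (l1 + l2 + m1 + m2 + 7))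
          * (1 - q ^ (2 * l1 + 2 * l2 + 2 * m1 + m2 + m3 + 14))) / (b1 * c1 * b2 * c2) := by
    have k1 : (1 : ℝ) - q ^ (l1 + l2 + m1 + m2 + 7) ≠ 0 := one_sub_pow_ne q hq0 hq1 (by omega)
    have k2 : (1 : ℝ) - q ^ (l1 + l2 + m1 + m2 + 8) ≠ 0 := one_sub_pow_ne q hq0 hq1 (by omega)
    have k3 : (1 : ℝ) - q ^ (l1 + l2 + m1 + m3 + 6) ≠ 0 := one_sub_pow_ne q hq0 hq1 (by omega)
    have k4 : (1 : ℝ) - q ^ (l1 + l2 + m1 + m3 + 7) ≠ 0 := one_sub_pow_ne q hq0 hq1 (by omega)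
    rw [hb1, hb2, hc1, hc2]; field_simp; ring
  have hu2 : c1⁻¹ - c3⁻¹ - b1⁻¹ + b3⁻¹
      = ((1 - q) * (q ^ (l1 + l2 + m2 + m3 + 5) - q ^ (l1 + l2 + m1 + m2 + 7))
          * (1 - q ^ (2 * l1 + 2 * l2 + m1 + 2 * m2 + m3 + 13))) / (b1 * c1 * b3 * c3) := by
    have k1 : (1 : ℝ) - q ^ (l1 + l2 + m1 + m2 + 7) ≠ 0 := one_sub_pow_ne q hq0 hq1 (by omega)
    have k2 : (1 : ℝ) - q ^ (l1 + l2 + m1 + m2 + 8) ≠ 0 := one_sub_pow_ne q hq0 hq1 (by omega)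
    have k3 : (1 : ℝ) - q ^ (l1 + l2 + m2 + m3 + 5) ≠ 0 := one_sub_pow_ne q hq0 hq1 (by omega)
    have k4 : (1 : ℝ) - q ^ (l1 + l2 + m2 + m3 + 6) ≠ 0 := one_sub_pow_ne q hq0 hq1 (by omega)
    rw [hb1, hb3, hc1, hc3]; field_simp; ring
  have hu3 : c2⁻¹ - c3⁻¹ - b2⁻¹ + b3⁻¹
      = ((1 - q) * (q ^ (l1 + l2 + m2 + m3 + 5) - q ^ (l1 + l2 + m1 + m3 + 6))
          * (1 - q ^ (2 * l1 + 2 * l2 + m1 + m2 + 2 * m3 + 12))) / (b2 * c2 * b3 * c3) := by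
    have k1 : (1 : ℝ) - q ^ (l1 + l2 + m1 + m3 + 6) ≠ 0 := one_sub_pow_ne q hq0 hq1 (by omega)
    have k2 : (1 : ℝ) - q ^ (l1 + l2 + m1 + m3 + 7) ≠ 0 := one_sub_pow_ne q hq0 hq1 (by omega)
    have k3 : (1 : ℝ) - q ^ (l1 + l2 + m2 + m3 + 5) ≠ 0 := one_sub_pow_ne q hq0 hq1 (by omega)
    have k4 : (1 : ℝ) - q ^ (l1 + l2 + m2 + m3 + 6) ≠ 0 := one_sub_pow_ne q hq0 hq1 (by omega)
    rw [hb2, hb3, hc2, hc3]; field_simp; ring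
  -- assemble
  have hg15 : (0:ℝ) < q ^ l2 - q ^ (l1 + 1) := by
    have : q ^ (l1 + 1) < q ^ l2 := pow_lt_pow_right_of_lt_one₀ hq0 hq1 (by omega)
    linarith
  have hq1ne : (1:ℝ) - q ≠ 0 := sub_ne_zero_of_ne (ne_of_gt hq1)
  have hDD : a1 * a2 * a3 * a4 * a5 * a6 * (b1 * c1 * b2 * c2 * b3 * c3) ≠ 0 := by
    repeat first | apply mul_ne_zero | assumption
  have hD1 : a1 * a2 * (b1 * c1 * b2 * c2) ≠ 0 := by
    repeat first | apply mul_ne_zero | assumption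
  have hD2 : a3 * a4 * (b1 * c1 * b3 * c3) ≠ 0 := by
    repeat first | apply mul_ne_zero | assumption
  have hD3 : a5 * a6 * (b2 * c2 * b3 * c3) ≠ 0 := by
    repeat first | apply mul_ne_zero | assumption
  have hqp : (q:ℝ) ^ (l2 + m2 + m3 + m3) ≠ 0 := pow_ne_zero _ hqe
  have hER : q ^ (l2 + m2 + m3 + m3) * (w0 * (a1 * a3 * a5 * a2 * a4 * a6 * (b3 * b2 * b1))) ≠ 0 := by
    repeat first | apply mul_ne_zero | assumption
  have hDDw : a1 * a2 * a3 * a4 * a5 * a6 * (b1 * c1 * b2 * c2 * b3 * c3) * w0 ≠ 0 :=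
    mul_ne_zero hDD nw0
  -- lift each term to the common denominator
  have LC1 : (q ^ (l1 + m1 + 5) - q ^ (l2 + m1 + 4)) *
        ((1 - q) * (q ^ (l1 + l2 + m1 + m3 + 6) - q ^ (l1 + l2 + m1 + m2 + 7))
          * (1 - q ^ (2 * l1 + 2 * l2 + 2 * m1 + m2 + m3 + 14))) /
        (a1 * a2 * (b1 * c1 * b2 * c2))
      = (q ^ (l1 + m1 + 5) - q ^ (l2 + m1 + 4)) *
        ((1 - q) * (q ^ (l1 + l2 + m1 + m3 + 6) - q ^ (l1 + l2 + m1 + m2 + 7))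
          * (1 - q ^ (2 * l1 + 2 * l2 + 2 * m1 + m2 + m3 + 14))) * (a3 * a4 * a5 * a6 * (b3 * c3)) /
        (a1 * a2 * a3 * a4 * a5 * a6 * (b1 * c1 * b2 * c2 * b3 * c3)) := by
    rw [div_eq_div_iff hD1 hDD]; ring
  have LC2 : (q ^ (l1 + m2 + 4) - q ^ (l2 + m2 + 3)) *
        ((1 - q) * (q ^ (l1 + l2 + m2 + m3 + 5) - q ^ (l1 + l2 + m1 + m2 + 7))
          * (1 - q ^ (2 * l1 + 2 * l2 + m1 + 2 * m2 + m3 + 13))) /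
        (a3 * a4 * (b1 * c1 * b3 * c3))
      = (q ^ (l1 + m2 + 4) - q ^ (l2 + m2 + 3)) *
        ((1 - q) * (q ^ (l1 + l2 + m2 + m3 + 5) - q ^ (l1 + l2 + m1 + m2 + 7))
          * (1 - q ^ (2 * l1 + 2 * l2 + m1 + 2 * m2 + m3 + 13))) * (a1 * a2 * a5 * a6 * (b2 * c2)) /
        (a1 * a2 * a3 * a4 * a5 * a6 * (b1 * c1 * b2 * c2 * b3 * c3)) := by
    rw [div_eq_div_iff hD2 hDD]; ring
  have LC3 : (q ^ (l1 + m3 + 3) - q ^ (l2 + m3 + 2)) *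
        ((1 - q) * (q ^ (l1 + l2 + m2 + m3 + 5) - q ^ (l1 + l2 + m1 + m3 + 6))
          * (1 - q ^ (2 * l1 + 2 * l2 + m1 + m2 + 2 * m3 + 12))) /
        (a5 * a6 * (b2 * c2 * b3 * c3))
      = (q ^ (l1 + m3 + 3) - q ^ (l2 + m3 + 2)) *
        ((1 - q) * (q ^ (l1 + l2 + m2 + m3 + 5) - q ^ (l1 + l2 + m1 + m3 + 6))
          * (1 - q ^ (2 * l1 + 2 * l2 + m1 + m2 + 2 * m3 + 12))) * (a1 * a2 * a3 * a4 * (b1 * c1)) /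
        (a1 * a2 * a3 * a4 * a5 * a6 * (b1 * c1 * b2 * c2 * b3 * c3)) := by
    rw [div_eq_div_iff hD3 hDD]; ring
  -- the core polynomial identity
  have hfinal :
      (q ^ (m1 + 4) * (q ^ (l1 + l2 + m1 + m2 + 7) - q ^ (l1 + l2 + m1 + m3 + 6))
          * (1 - q ^ (2 * l1 + 2 * l2 + 2 * m1 + m2 + m3 + 14)) * (a3 * a4 * a5 * a6 * (b3 * c3))
        - q ^ (m2 + 3) * (q ^ (l1 + l2 + m1 + m2 + 7) - q ^ (l1 + l2 + m2 + m3 + 5))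
          * (1 - q ^ (2 * l1 + 2 * l2 + m1 + 2 * m2 + m3 + 13)) * (a1 * a2 * a5 * a6 * (b2 * c2))
        + q ^ (m3 + 2) * (q ^ (l1 + l2 + m1 + m3 + 6) - q ^ (l1 + l2 + m2 + m3 + 5))
          * (1 - q ^ (2 * l1 + 2 * l2 + m1 + m2 + 2 * m3 + 12)) * (a1 * a2 * a3 * a4 * (b1 * c1)))
      = (-1 : ℝ) * q ^ (l1 + l2 + 7) * (q ^ m2 - q ^ (m1 + 1)) * (q ^ m3 - q ^ (m1 + 2))
          * (q ^ m3 - q ^ (m2 + 1)) * (1 - q ^ (l1 + l2 + m1 + m2 + m3 + l1 + 10))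
          * (1 - q ^ (l1 + l2 + m1 + m2 + m3 + l2 + 9)) * (c1 * c2 * c3) := by
    rw [ha1, ha2, ha3, ha4, ha5, ha6, hb1, hb2, hb3, hc1, hc2, hc3]
    ring
  -- the grouped main identity
  have main : (1 - q) ^ 3 *
      (w0⁻¹ * ((a1⁻¹ - a2⁻¹) * (c1⁻¹ - c2⁻¹ - b1⁻¹ + b2⁻¹)
        - (a3⁻¹ - a4⁻¹) * (c1⁻¹ - c3⁻¹ - b1⁻¹ + b3⁻¹)
        + (a5⁻¹ - a6⁻¹) * (c2⁻¹ - c3⁻¹ - b2⁻¹ + b3⁻¹)))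
      = -1 * q ^ (l1 + 2 * l2 + m2 + 2 * m3 + 7) * (1 - q) ^ 4
          * ((q ^ l2 - q ^ (l1 + 1)) / q ^ l2)
          * (1 - q ^ (l1 + l2 + m1 + m2 + m3 + l1 + 10))
          * (1 - q ^ (l1 + l2 + m1 + m2 + m3 + l2 + 9)) / w0
          * ((q ^ m2 - q ^ (m1 + 1)) / q ^ m2 * ((q ^ m3 - q ^ (m1 + 2)) / q ^ m3)
              * ((q ^ m3 - q ^ (m2 + 1)) / q ^ m3))
          / (a1 * a3 * a5 * a2 * a4 * a6 * (b3 * b2 * b1)) := by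
    have hR : -1 * q ^ (l1 + 2 * l2 + m2 + 2 * m3 + 7) * (1 - q) ^ 4
          * ((q ^ l2 - q ^ (l1 + 1)) / q ^ l2)
          * (1 - q ^ (l1 + l2 + m1 + m2 + m3 + l1 + 10))
          * (1 - q ^ (l1 + l2 + m1 + m2 + m3 + l2 + 9)) / w0
          * ((q ^ m2 - q ^ (m1 + 1)) / q ^ m2 * ((q ^ m3 - q ^ (m1 + 2)) / q ^ m3)
              * ((q ^ m3 - q ^ (m2 + 1)) / q ^ m3))
          / (a1 * a3 * a5 * a2 * a4 * a6 * (b3 * b2 * b1))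
        = (-1 : ℝ) * q ^ (l1 + 2 * l2 + m2 + 2 * m3 + 7) * (1 - q) ^ 4
            * (q ^ l2 - q ^ (l1 + 1)) * (1 - q ^ (l1 + l2 + m1 + m2 + m3 + l1 + 10))
            * (1 - q ^ (l1 + l2 + m1 + m2 + m3 + l2 + 9)) * (q ^ m2 - q ^ (m1 + 1))
            * (q ^ m3 - q ^ (m1 + 2)) * (q ^ m3 - q ^ (m2 + 1))
          / (q ^ (l2 + m2 + m3 + m3) * (w0 * (a1 * a3 * a5 * a2 * a4 * a6 * (b3 * b2 * b1)))) := by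
      rw [div_eq_div_iff (by repeat first | apply mul_ne_zero | assumption) hER]
      field_simp
      ring
    rw [hd1, hd2, hd3, hu1, hu2, hu3, div_mul_div_comm, div_mul_div_comm, div_mul_div_comm,
      LC1, LC2, LC3, div_sub_div_same, ← add_div, hR]
    rw [inv_mul_eq_div, div_div, ← mul_div_assoc,
      div_eq_div_iff hDDw hER]
    linear_combination ((1 - q) ^ 4 * (q ^ l2 - q ^ (l1 + 1)) * q ^ (l2 + m2 + m3 + m3) * w0
      * (a1 * a2 * a3 * a4 * a5 * a6) * (b1 * b2 * b3)) * hfinal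
  linear_combination main
end

section
/- Let 0 < q < 1, let n ≥ 1 and k ≥ 1 be integers, and let μ ∈ Par_n be a partition. Then ∏_{j=1}^n (1 − q^{|μ|+μ_j+k+n(n+3)/2−j+1}) / (1 − q^{|μ|−μ_j+k+C(n,2)+j−1}) = (1 − q^{2|μ|+2C(n+1,2)+k})/(1 − q^k) − q^{−C(n,2)−|μ|} ((1 + q^{|μ|+C(n+1,2)+k})/(1 − q^k)) · ∑_{ℓ=1}^n q^{μ_ℓ−ℓ+1} · ((1 − q^{C(n,2)+|μ|−μ_ℓ+ℓ−1})/(1 − q^{C(n,2)+|μ|−μ_ℓ+ℓ+k−1})) · (1 − q^{n+1−ℓ+μ_ℓ}) · ∏_{j=1, j≠ℓ}^n (1 − q^{2n+2−j−ℓ+μ_j+μ_ℓ}) / (1 − q^{μ_ℓ−μ_j+j−ℓ}), where C(a,b) denotes a binomial coefficient. -/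
open Finset

lemma base_aux (a u v x : ℝ) (hu : u ≠ 0) (hv : v ≠ 0) (huv : u ≠ v)
    (h1 : 1 - u*x ≠ 0) (h2 : 1 - v*x ≠ 0) :
    (1 - a*x)/(1-v*x) * (1/(1-u*x))
      = (1 - a/u)/(1 - v/u) * (1/(1-u*x)) + (1 - a/v)/(1-v*x) * (1/(1-u/v)) := by
  have h3 : 1 - v/u ≠ 0 := by
    rw [sub_ne_zero]; intro h; exact huv ((div_eq_one_iff_eq hu).mp h.symm).symm
  have h4 : 1 - u/v ≠ 0 := by
    rw [sub_ne_zero]; intro h; exact huv ((div_eq_one_iff_eq hv).mp h.symm)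
  have e3 : 1 - v/u = (u - v)/u := by field_simp
  have e4 : 1 - u/v = (v - u)/v := by field_simp
  have huv' : u - v ≠ 0 := sub_ne_zero.mpr huv
  have hvu' : v - u ≠ 0 := sub_ne_zero.mpr (Ne.symm huv)
  rw [e3, e4]
  have h1' : 1 - x*u ≠ 0 := by rwa [mul_comm]
  have h2' : 1 - x*v ≠ 0 := by rwa [mul_comm]
  field_simp
  ring

lemma pf {ι : Type*} [DecidableEq ι] (a c : ι → ℝ) (s : Finset ι)
    (hc0 : ∀ i ∈ s, c i ≠ 0) (hinj : ∀ i ∈ s, ∀ j ∈ s, c i = c j → i = j) :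
    ∀ x : ℝ, (∀ i ∈ s, 1 - c i * x ≠ 0) →
    ∏ i ∈ s, (1 - a i * x) / (1 - c i * x)
      = (∏ i ∈ s, a i / c i)
        + ∑ ℓ ∈ s, ((1 - a ℓ / c ℓ)
            * ∏ i ∈ s.erase ℓ, ((1 - a i / c ℓ) / (1 - c i / c ℓ))) / (1 - c ℓ * x) := by
  induction s using Finset.induction_on with
  | empty => intro x hx; simp
  | @insert i₀ s' hi IH =>
    have hc0' : ∀ i ∈ s', c i ≠ 0 := fun i hi' => hc0 i (mem_insert_of_mem hi')
    have hinj' : ∀ i ∈ s', ∀ j ∈ s', c i = c j → i = j :=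
      fun i hi' j hj' h => hinj i (mem_insert_of_mem hi') j (mem_insert_of_mem hj') h
    have IH' := IH hc0' hinj'
    intro x hx
    have hc₀ : c i₀ ≠ 0 := hc0 i₀ (mem_insert_self _ _)
    have hD : 1 - c i₀ * x ≠ 0 := hx i₀ (mem_insert_self _ _)
    have hne : ∀ ℓ ∈ s', c ℓ ≠ c i₀ := by
      intro ℓ hl h
      have h2 : ℓ = i₀ := hinj ℓ (mem_insert_of_mem hl) i₀ (mem_insert_self _ _) h
      rw [h2] at hl; exact hi hl
    -- IH at 1/c i₀
    have hxi : ∀ i ∈ s', 1 - c i * (1 / c i₀) ≠ 0 := by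
      intro i hi'
      rw [mul_one_div]
      intro h
      have h2 : c i / c i₀ = 1 := by linarith [sub_eq_zero.mp h]
      exact hne i hi' ((div_eq_one_iff_eq hc₀).mp h2)
    have key := IH' (1 / c i₀) hxi
    have hdiv : ∀ i ∈ s', (1 - a i * (1 / c i₀)) / (1 - c i * (1 / c i₀))
        = (1 - a i / c i₀) / (1 - c i / c i₀) := by
      intro i hi'; rw [mul_one_div, mul_one_div]
    rw [Finset.prod_congr rfl hdiv] at key
    have hsum : ∀ ℓ ∈ s', 1 - c ℓ * (1 / c i₀) = 1 - c ℓ / c i₀ := by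
      intro ℓ hl; rw [mul_one_div]
    rw [Finset.sum_congr rfl (fun ℓ hl => by rw [hsum ℓ hl])] at key
    -- now main computation
    rw [Finset.prod_insert hi, Finset.prod_insert hi, Finset.sum_insert hi,
      IH' x (fun i hi' => hx i (mem_insert_of_mem hi'))]
    have herase : (insert i₀ s').erase i₀ = s' := Finset.erase_insert hi
    rw [herase]
    have hprodterm : ∀ ℓ ∈ s', (insert i₀ s').erase ℓ = insert i₀ (s'.erase ℓ) := by
      intro ℓ hl
      have hne2 : ℓ ≠ i₀ := fun h => hi (h ▸ hl)
      rw [Finset.erase_insert_of_ne (Ne.symm hne2)]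
    have hsum2 : ∀ ℓ ∈ s',
        ((1 - a ℓ / c ℓ) * ∏ i ∈ (insert i₀ s').erase ℓ, ((1 - a i / c ℓ) / (1 - c i / c ℓ)))
          / (1 - c ℓ * x)
        = ((1 - a i₀ / c ℓ) / (1 - c i₀ / c ℓ)) *
            (((1 - a ℓ / c ℓ) * ∏ i ∈ s'.erase ℓ, ((1 - a i / c ℓ) / (1 - c i / c ℓ)))
              / (1 - c ℓ * x)) := by
      intro ℓ hl
      rw [hprodterm ℓ hl, Finset.prod_insert (fun h => hi (Finset.mem_of_mem_erase h))]
      ring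
    rw [Finset.sum_congr rfl hsum2]
    -- abbreviations
    set C' := ∏ i ∈ s', a i / c i with hC'
    -- per-term identity
    have hterm : ∀ ℓ ∈ s',
        (1 - a i₀ * x) / (1 - c i₀ * x) *
          (((1 - a ℓ / c ℓ) * ∏ i ∈ s'.erase ℓ, ((1 - a i / c ℓ) / (1 - c i / c ℓ)))
            / (1 - c ℓ * x))
        = ((1 - a i₀ / c ℓ) / (1 - c i₀ / c ℓ)) *
            (((1 - a ℓ / c ℓ) * ∏ i ∈ s'.erase ℓ, ((1 - a i / c ℓ) / (1 - c i / c ℓ)))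
              / (1 - c ℓ * x))
          + ((1 - a i₀ / c i₀) / (1 - c i₀ * x)) *
            (((1 - a ℓ / c ℓ) * ∏ i ∈ s'.erase ℓ, ((1 - a i / c ℓ) / (1 - c i / c ℓ)))
              / (1 - c ℓ / c i₀)) := by
      intro ℓ hl
      have hcℓ : c ℓ ≠ 0 := hc0' ℓ hl
      have hDℓ : 1 - c ℓ * x ≠ 0 := hx ℓ (mem_insert_of_mem hl)
      have base := base_aux (a i₀) (c ℓ) (c i₀) x hcℓ hc₀ (hne ℓ hl) hDℓ hD
      set K := (1 - a ℓ / c ℓ) * ∏ i ∈ s'.erase ℓ, ((1 - a i / c ℓ) / (1 - c i / c ℓ)) with hK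
      have expand : ∀ y : ℝ, K / y = K * (1 / y) := fun y => mul_one_div K y |>.symm
      rw [expand, expand]
      linear_combination K * base
    -- combine
    rw [mul_add, Finset.mul_sum, Finset.sum_congr rfl hterm, Finset.sum_add_distrib]
    have hhead : (1 - a i₀ * x) / (1 - c i₀ * x) * C'
        = a i₀ / c i₀ * C' + ((1 - a i₀ / c i₀) / (1 - c i₀ * x)) * C' := by
      have hD' : 1 - x * c i₀ ≠ 0 := by rwa [mul_comm]
      field_simp
      ring
    rw [hhead]
    have hfactor : ∑ ℓ ∈ s', ((1 - a i₀ / c i₀) / (1 - c i₀ * x)) *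
          (((1 - a ℓ / c ℓ) * ∏ i ∈ s'.erase ℓ, ((1 - a i / c ℓ) / (1 - c i / c ℓ)))
            / (1 - c ℓ / c i₀))
        = ((1 - a i₀ / c i₀) / (1 - c i₀ * x)) *
          ∑ ℓ ∈ s', (((1 - a ℓ / c ℓ) * ∏ i ∈ s'.erase ℓ, ((1 - a i / c ℓ) / (1 - c i / c ℓ)))
            / (1 - c ℓ / c i₀)) := by
      rw [Finset.mul_sum]
    rw [hfactor]
    have : C' + ∑ ℓ ∈ s', (((1 - a ℓ / c ℓ) * ∏ i ∈ s'.erase ℓ, ((1 - a i / c ℓ) / (1 - c i / c ℓ)))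
            / (1 - c ℓ / c i₀)) = ∏ i ∈ s', (1 - a i / c i₀) / (1 - c i / c i₀) := key.symm
    have hrepl : ((1 - a i₀ / c i₀) * ∏ i ∈ s', ((1 - a i / c i₀) / (1 - c i / c i₀)))
          / (1 - c i₀ * x)
        = ((1 - a i₀ / c i₀) / (1 - c i₀ * x)) * C'
          + ((1 - a i₀ / c i₀) / (1 - c i₀ * x)) *
            ∑ ℓ ∈ s', (((1 - a ℓ / c ℓ) * ∏ i ∈ s'.erase ℓ, ((1 - a i / c ℓ) / (1 - c i / c ℓ)))
              / (1 - c ℓ / c i₀)) := by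
      rw [← mul_add, this]; ring
    rw [hrepl]
    ring

lemma prod_zpow_sum (x : ℝ) (hx : x ≠ 0) {ι : Type*} (s : Finset ι) (f : ι → ℤ) :
    ∏ i ∈ s, x ^ (f i) = x ^ (∑ i ∈ s, f i) := by
  induction s using Finset.cons_induction with
  | empty => simp
  | cons i s hi IH => rw [Finset.prod_cons, Finset.sum_cons, IH, zpow_add₀ hx]

lemma assemble {n : ℕ} (b w : Fin n → ℝ) (Fq X L : ℝ)
    (hbX : ∀ j, 1 - b j * X ≠ 0) (hX : 1 - X ≠ 0)
    (h1 : L = Fq*Fq + ∑ ℓ, (b ℓ + Fq) * w ℓ / (1 - b ℓ * X))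
    (h2 : ∑ ℓ, w ℓ = 1 - Fq) :
    L = (1 - Fq*Fq*X)/(1-X) - (1 + Fq*X)/(1-X) * ∑ ℓ, (1 - b ℓ) * w ℓ / (1 - b ℓ * X) := by
  have hper : ∀ ℓ : Fin n, (1 + Fq*X)/(1-X) * ((1 - b ℓ) * w ℓ / (1 - b ℓ * X))
      = (1 + Fq) * w ℓ / (1-X) - (b ℓ + Fq) * w ℓ / (1 - b ℓ * X) := by
    intro ℓ
    rw [div_mul_div_comm, div_sub_div _ _ hX (hbX ℓ)]
    congr 1
    ring
  rw [Finset.mul_sum, Finset.sum_congr rfl (fun ℓ _ => hper ℓ), Finset.sum_sub_distrib, h1]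
  have hsum1 : ∑ ℓ : Fin n, (1 + Fq) * w ℓ / (1-X) = (1 + Fq) * (1 - Fq) / (1-X) := by
    rw [← h2, Finset.mul_sum, Finset.sum_div]
  rw [hsum1]
  have : (1 - Fq*Fq*X)/(1-X) - (1 + Fq) * (1 - Fq) / (1-X) = Fq*Fq := by
    field_simp
    ring
  linarith [this]

theorem stmt18 (q : ℝ) (hq0 : 0 < q) (hq1 : q < 1) (n k : ℕ) (hn : 1 ≤ n) (hk : 1 ≤ k)
    (μ : Fin n → ℕ) (hμ : Antitone μ) :
    (∏ j : Fin n,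
        (1 - q ^ (((∑ t, μ t : ℕ) : ℤ) + (μ j : ℤ) + (k : ℤ)
            + ((n * (n + 3) / 2 : ℕ) : ℤ) - (((j : ℕ) : ℤ) + 1) + 1))
          / (1 - q ^ (((∑ t, μ t : ℕ) : ℤ) - (μ j : ℤ) + (k : ℤ)
              + ((n.choose 2 : ℕ) : ℤ) + (((j : ℕ) : ℤ) + 1) - 1)))
      = (1 - q ^ (2 * (∑ t, μ t) + 2 * (n + 1).choose 2 + k)) / (1 - q ^ k)
        - q ^ (-((n.choose 2 : ℕ) : ℤ) - ((∑ t, μ t : ℕ) : ℤ))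
            * ((1 + q ^ ((∑ t, μ t) + (n + 1).choose 2 + k)) / (1 - q ^ k))
            * ∑ ℓ : Fin n,
                q ^ ((μ ℓ : ℤ) - (((ℓ : ℕ) : ℤ) + 1) + 1)
                  * ((1 - q ^ (((n.choose 2 : ℕ) : ℤ) + ((∑ t, μ t : ℕ) : ℤ)
                        - (μ ℓ : ℤ) + (((ℓ : ℕ) : ℤ) + 1) - 1))
                    / (1 - q ^ (((n.choose 2 : ℕ) : ℤ) + ((∑ t, μ t : ℕ) : ℤ)
                        - (μ ℓ : ℤ) + (((ℓ : ℕ) : ℤ) + 1) + (k : ℤ) - 1)))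
                  * (1 - q ^ ((n : ℤ) + 1 - (((ℓ : ℕ) : ℤ) + 1) + (μ ℓ : ℤ)))
                  * ∏ j ∈ Finset.univ.erase ℓ,
                      (1 - q ^ (2 * (n : ℤ) + 2 - (((j : ℕ) : ℤ) + 1)
                          - (((ℓ : ℕ) : ℤ) + 1) + (μ j : ℤ) + (μ ℓ : ℤ)))
                        / (1 - q ^ ((μ ℓ : ℤ) - (μ j : ℤ)
                            + ((j : ℕ) : ℤ) - ((ℓ : ℕ) : ℤ))) := by
  have hq : q ≠ 0 := ne_of_gt hq0
  set m := ∑ t, μ t with hm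
  set N := n.choose 2 with hN
  -- nat arithmetic facts
  have h1n : n - 1 + 1 = n := Nat.succ_pred_eq_of_pos hn
  have heven : Even ((n-1) * n) := by
    have := Nat.even_mul_succ_self (n-1); rwa [h1n] at this
  have h2N : 2 * N = n * (n - 1) := by
    rw [hN, Nat.choose_two_right, mul_comm n (n-1)]
    exact Nat.mul_div_cancel' heven.two_dvd
  have h2H : 2 * (n * (n + 3) / 2) = n * (n + 3) := by
    have he : Even (n * (n+3)) := by
      have h := Nat.even_mul_succ_self n
      have e : n * (n+3) = n * (n+1) + 2*n := by ring
      rw [e]; exact h.add (even_two_mul n)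
    exact Nat.mul_div_cancel' he.two_dvd
  have hmulid : n * (n+3) = n * (n-1) + 4 * n := by
    rcases n with _ | p
    · simp
    · simp only [Nat.succ_sub_one]; ring
  have hHalfNat : n * (n + 3) / 2 = N + 2 * n := by
    have h : 2 * (n * (n+3)/2) = 2 * (N + 2*n) := by
      rw [h2H, hmulid, ← h2N]; ring
    exact Nat.eq_of_mul_eq_mul_left two_pos h
  have hchoose : (n+1).choose 2 = N + n := by
    have h2N1 : 2 * ((n+1).choose 2) = n * (n+1) := by
      rw [Nat.choose_two_right, Nat.add_sub_cancel, mul_comm (n+1) n]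
      exact Nat.mul_div_cancel' (Nat.even_mul_succ_self n).two_dvd
    have hmulid2 : n * (n+1) = n * (n-1) + 2 * n := by
      rcases n with _ | p
      · simp
      · simp only [Nat.succ_sub_one]; ring
    have h : 2 * ((n+1).choose 2) = 2 * (N + n) := by
      rw [h2N1, hmulid2, ← h2N]; ring
    exact Nat.eq_of_mul_eq_mul_left two_pos h
  have hHalf : ((n * (n + 3) / 2 : ℕ) : ℤ) = (N : ℤ) + 2 * (n : ℤ) := by
    exact_mod_cast congrArg (Nat.cast : ℕ → ℤ) hHalfNat
  have hnnZ : (n:ℤ) * (n:ℤ) - (n:ℤ) = 2 * (N:ℤ) := by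
    have : ((2 * N : ℕ) : ℤ) = ((n * (n-1) : ℕ) : ℤ) := Nat.cast_inj.mpr h2N
    push_cast [Nat.cast_sub hn] at this
    linarith [this]
  -- sums
  have hsumjNat : (∑ j ∈ Finset.range n, j) = N := by
    have hs2 := Finset.sum_range_id_mul_two n
    have : (∑ i ∈ Finset.range n, i) * 2 = 2 * N := by rw [hs2, ← h2N]
    omega
  have hsumj : ∑ j : Fin n, (((j:ℕ)):ℤ) = (N:ℤ) := by
    rw [Fin.sum_univ_eq_sum_range (fun i => ((i:ℕ):ℤ)) n]
    rw [← Nat.cast_sum]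
    exact_mod_cast congrArg (Nat.cast : ℕ → ℤ) hsumjNat
  have hsummu : ∑ j : Fin n, ((μ j : ℕ):ℤ) = (m:ℤ) := by
    rw [hm]; push_cast; rfl
  -- definitions
  obtain ⟨A, hAdef⟩ : ∃ A : Fin n → ℤ, ∀ j, A j = (m:ℤ) + (μ j:ℤ) + (N:ℤ) + 2*(n:ℤ) - ((j:ℕ):ℤ) :=
    ⟨_, fun j => rfl⟩
  obtain ⟨B, hBdef⟩ : ∃ B : Fin n → ℤ, ∀ j, B j = (m:ℤ) - (μ j:ℤ) + (N:ℤ) + ((j:ℕ):ℤ) :=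
    ⟨_, fun j => rfl⟩
  obtain ⟨aa, haadef⟩ : ∃ aa : Fin n → ℝ, ∀ j, aa j = q ^ (A j) := ⟨_, fun j => rfl⟩
  obtain ⟨b, hbdef⟩ : ∃ b : Fin n → ℝ, ∀ j, b j = q ^ (B j) := ⟨_, fun j => rfl⟩
  set X : ℝ := q ^ ((k:ℕ):ℤ) with hXdef
  set Fq : ℝ := q ^ ((m:ℤ) + (N:ℤ) + (n:ℤ)) with hFqdef
  set x₁ : ℝ := -(1/Fq) with hx₁def
  -- positivity etc
  have hbpos : ∀ j, 0 < b j := fun j => by rw [hbdef j]; exact zpow_pos hq0 _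
  have haapos : ∀ j, 0 < aa j := fun j => by rw [haadef j]; exact zpow_pos hq0 _
  have hbne : ∀ j, b j ≠ 0 := fun j => ne_of_gt (hbpos j)
  have hFqpos : 0 < Fq := by rw [hFqdef]; exact zpow_pos hq0 _
  have hμm : ∀ j, (μ j : ℤ) ≤ (m:ℤ) := by
    intro j
    have : μ j ≤ m := by
      rw [hm]; exact Finset.single_le_sum (fun i _ => Nat.zero_le _) (mem_univ j)
    exact_mod_cast this
  have hB0 : ∀ j, 0 ≤ B j := by
    intro j
    have h1 := hμm j
    rw [hBdef j]
    omega
  have hBinj : ∀ i j : Fin n, B i = B j → i = j := by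
    have hmono : ∀ i j : Fin n, i < j → B i < B j := by
      intro i j hij
      have h1 : μ j ≤ μ i := hμ (le_of_lt hij)
      have h2 : (i:ℕ) < (j:ℕ) := hij
      have h1' : (μ j : ℤ) ≤ (μ i : ℤ) := by exact_mod_cast h1
      have h2' : ((i:ℕ):ℤ) < ((j:ℕ):ℤ) := by exact_mod_cast h2
      rw [hBdef i, hBdef j]
      linarith
    intro i j h
    rcases lt_trichotomy i j with hlt|heq|hgt
    · exact absurd h (ne_of_lt (hmono i j hlt))
    · exact heq
    · exact absurd h.symm (ne_of_lt (hmono j i hgt))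
  have hbinj : ∀ i ∈ (univ : Finset (Fin n)), ∀ j ∈ (univ : Finset (Fin n)), b i = b j → i = j := by
    intro i _ j _ h
    rw [hbdef i, hbdef j] at h
    exact hBinj i j (zpow_right_injective₀ hq0 (ne_of_lt hq1) h)
  -- nonvanishing at X
  have hbXlt : ∀ j, b j * X < 1 := by
    intro j
    rw [hbdef j, hXdef, ← zpow_add₀ hq]
    apply zpow_lt_one₀ hq0 hq1
    have h1 := hB0 j
    have h2 : (1:ℤ) ≤ ((k:ℕ):ℤ) := by exact_mod_cast hk
    omega
  have hbXpos : ∀ j, 0 < b j * X := by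
    intro j
    have : (0:ℝ) < X := by rw [hXdef]; exact zpow_pos hq0 _
    exact mul_pos (hbpos j) this
  have hbX : ∀ j, 1 - b j * X ≠ 0 := fun j => ne_of_gt (by linarith [hbXlt j])
  have hbX' : ∀ j ∈ (univ : Finset (Fin n)), 1 - b j * X ≠ 0 := fun j _ => hbX j
  have hXlt : X < 1 := by
    rw [hXdef]
    apply zpow_lt_one₀ hq0 hq1
    exact_mod_cast hk
  have hX1 : 1 - X ≠ 0 := ne_of_gt (by linarith)
  have hbx₁ : ∀ j ∈ (univ : Finset (Fin n)), 1 - b j * x₁ ≠ 0 := by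
    intro j _
    have h1 : 0 < b j / Fq := div_pos (hbpos j) hFqpos
    have h2 : b j * x₁ = -(b j / Fq) := by rw [hx₁def]; ring
    rw [h2]
    intro hcon
    nlinarith
  -- key multiplicative relation
  have hab : ∀ j, aa j * b j = Fq * Fq := by
    intro j
    rw [haadef j, hbdef j, hFqdef, ← zpow_add₀ hq, ← zpow_add₀ hq]
    congr 1
    rw [hAdef j, hBdef j]
    ring
  -- partial fraction decompositions
  have E1 := pf aa b univ (fun j _ => hbne j) hbinj X hbX'
  have E2 := pf aa b univ (fun j _ => hbne j) hbinj x₁ hbx₁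
  -- P
  obtain ⟨P, hPdef⟩ : ∃ P : Fin n → ℝ, ∀ ℓ, P ℓ
      = ∏ i ∈ univ.erase ℓ, ((1 - aa i / b ℓ) / (1 - b i / b ℓ)) := ⟨_, fun ℓ => rfl⟩
  obtain ⟨w, hwdef⟩ : ∃ w : Fin n → ℝ, ∀ ℓ, w ℓ = (1 - Fq / b ℓ) * P ℓ / b ℓ := ⟨_, fun ℓ => rfl⟩
  simp only [← hPdef] at E1 E2
  -- constant term
  have hC : ∏ i : Fin n, aa i / b i = Fq * Fq := by
    have hfac : ∀ i ∈ (univ : Finset (Fin n)), aa i / b i = q ^ (A i - B i) := by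
      intro i _
      rw [haadef i, hbdef i, ← zpow_sub₀ hq]
    rw [Finset.prod_congr rfl hfac, prod_zpow_sum q hq, hFqdef, ← zpow_add₀ hq]
    congr 1
    have hsAB : ∀ i ∈ (univ : Finset (Fin n)), A i - B i = 2*(μ i:ℤ) + 2*(n:ℤ) - 2*((i:ℕ):ℤ) := by
      intro i _
      rw [hAdef i, hBdef i]; ring
    rw [Finset.sum_congr rfl hsAB]
    rw [Finset.sum_sub_distrib, Finset.sum_add_distrib, Finset.sum_const, card_univ,
      Fintype.card_fin, ← Finset.mul_sum, ← Finset.mul_sum, hsummu, hsumj]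
    push_cast
    linear_combination 2 * hnnZ
  -- sum of B
  have hsumB : ∑ i : Fin n, B i = (n:ℤ)*(m:ℤ) - (m:ℤ) + (n:ℤ)*(N:ℤ) + (N:ℤ) := by
    rw [Finset.sum_congr rfl (fun i (_ : i ∈ univ) => hBdef i)]
    rw [Finset.sum_add_distrib, Finset.sum_add_distrib, Finset.sum_sub_distrib]
    simp only [Finset.sum_const, card_univ, Fintype.card_fin, nsmul_eq_mul]
    rw [hsummu, hsumj]
  -- value at x₁
  have hE2L : ∏ i : Fin n, (1 - aa i * x₁) / (1 - b i * x₁) = Fq := by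
    have hfac : ∀ i ∈ (univ : Finset (Fin n)), (1 - aa i * x₁) / (1 - b i * x₁)
        = q ^ (((m:ℤ) + (N:ℤ) + (n:ℤ)) - B i) := by
      intro i _
      have hrhs : q ^ (((m:ℤ) + (N:ℤ) + (n:ℤ)) - B i) = Fq / b i := by
        rw [zpow_sub₀ hq, ← hFqdef, ← hbdef i]
      rw [hrhs, div_eq_div_iff (hbx₁ i (mem_univ i)) (hbne i)]
      rw [hx₁def]
      field_simp
      linear_combination hab i
    rw [Finset.prod_congr rfl hfac, prod_zpow_sum q hq, hFqdef]
    congr 1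
    rw [Finset.sum_sub_distrib, Finset.sum_const, card_univ, Fintype.card_fin, hsumB]
    push_cast
    linear_combination hnnZ
  -- w relations
  have hRw : ∀ ℓ : Fin n, (1 - aa ℓ / b ℓ) * P ℓ = (b ℓ + Fq) * w ℓ := by
    intro ℓ
    rw [hwdef ℓ]
    have h := hab ℓ
    have hbℓ := hbne ℓ
    field_simp
    linear_combination (-(P ℓ))*h
  have hW : ∑ ℓ : Fin n, w ℓ = 1 - Fq := by
    have hper : ∀ ℓ ∈ (univ : Finset (Fin n)),
        ((1 - aa ℓ / b ℓ) * P ℓ) / (1 - b ℓ * x₁) = Fq * w ℓ := by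
      intro ℓ _
      rw [hRw ℓ]
      have hd : 1 - b ℓ * x₁ = (Fq + b ℓ)/Fq := by
        rw [hx₁def]; field_simp; ring
      rw [hd]
      have hFb : Fq + b ℓ ≠ 0 := ne_of_gt (by linarith [hbpos ℓ, hFqpos])
      field_simp
      ring
    rw [Finset.sum_congr rfl hper, ← Finset.mul_sum, hE2L, hC] at E2
    have hS : Fq * (∑ ℓ : Fin n, w ℓ) = Fq * (1 - Fq) := by linarith [E2]
    exact mul_left_cancel₀ (ne_of_gt hFqpos) hS
  -- h1 for assemble
  have h1 : (∏ i : Fin n, (1 - aa i * X) / (1 - b i * X))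
      = Fq*Fq + ∑ ℓ : Fin n, (b ℓ + Fq) * w ℓ / (1 - b ℓ * X) := by
    rw [E1, hC]
    congr 1
    exact Finset.sum_congr rfl (fun ℓ _ => by rw [hRw ℓ])
  have hmain := assemble b w Fq X _ hbX hX1 h1 hW
  -- rewrite the goal
  have hL : ∀ j ∈ (univ : Finset (Fin n)),
      (1 - q ^ ((m:ℤ) + (μ j:ℤ) + ((k:ℕ):ℤ) + ((n * (n + 3) / 2 : ℕ) : ℤ) - (((j:ℕ):ℤ) + 1) + 1))
        / (1 - q ^ ((m:ℤ) - (μ j:ℤ) + ((k:ℕ):ℤ) + ((N:ℕ):ℤ) + (((j:ℕ):ℤ) + 1) - 1))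
      = (1 - aa j * X) / (1 - b j * X) := by
    intro j _
    have e1 : q ^ ((m:ℤ) + (μ j:ℤ) + ((k:ℕ):ℤ) + ((n * (n + 3) / 2 : ℕ) : ℤ)
        - (((j:ℕ):ℤ) + 1) + 1) = aa j * X := by
      rw [haadef j, hXdef, ← zpow_add₀ hq]
      congr 1
      rw [hAdef j, hHalf]
      ring
    have e2 : q ^ ((m:ℤ) - (μ j:ℤ) + ((k:ℕ):ℤ) + ((N:ℕ):ℤ) + (((j:ℕ):ℤ) + 1) - 1)
        = b j * X := by
      rw [hbdef j, hXdef, ← zpow_add₀ hq]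
      congr 1
      rw [hBdef j]
      ring
    rw [e1, e2]
  have hqk : (q:ℝ) ^ k = X := by rw [hXdef, zpow_natCast]
  have hhead1 : q ^ (2 * m + 2 * (n + 1).choose 2 + k) = Fq * Fq * X := by
    rw [hchoose, ← zpow_natCast q (2 * m + 2 * (N + n) + k), hFqdef, hXdef,
      ← zpow_add₀ hq, ← zpow_add₀ hq]
    congr 1
    push_cast
    ring
  have hhead2 : q ^ (m + (n + 1).choose 2 + k) = Fq * X := by
    rw [hchoose, ← zpow_natCast q (m + (N + n) + k), hFqdef, hXdef, ← zpow_add₀ hq]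
    congr 1
    push_cast
    ring
  have hterm : ∀ ℓ ∈ (univ : Finset (Fin n)),
      q ^ (-((N:ℕ):ℤ) - ((m:ℕ):ℤ)) *
        (q ^ ((μ ℓ : ℤ) - (((ℓ : ℕ) : ℤ) + 1) + 1)
          * ((1 - q ^ (((N:ℕ) : ℤ) + ((m:ℕ) : ℤ) - (μ ℓ : ℤ) + (((ℓ : ℕ) : ℤ) + 1) - 1))
            / (1 - q ^ (((N:ℕ) : ℤ) + ((m:ℕ) : ℤ) - (μ ℓ : ℤ) + (((ℓ : ℕ) : ℤ) + 1)
                + ((k:ℕ) : ℤ) - 1)))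
          * (1 - q ^ ((n : ℤ) + 1 - (((ℓ : ℕ) : ℤ) + 1) + (μ ℓ : ℤ)))
          * ∏ j ∈ Finset.univ.erase ℓ,
              (1 - q ^ (2 * (n : ℤ) + 2 - (((j : ℕ) : ℤ) + 1)
                  - (((ℓ : ℕ) : ℤ) + 1) + (μ j : ℤ) + (μ ℓ : ℤ)))
                / (1 - q ^ ((μ ℓ : ℤ) - (μ j : ℤ) + ((j : ℕ) : ℤ) - ((ℓ : ℕ) : ℤ))))
      = (1 - b ℓ) * w ℓ / (1 - b ℓ * X) := by
    intro ℓ _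
    have hd1 : q ^ (((N:ℕ):ℤ) + ((m:ℕ):ℤ) - (μ ℓ:ℤ) + (((ℓ:ℕ):ℤ) + 1) - 1) = b ℓ := by
      rw [hbdef ℓ]; congr 1; rw [hBdef ℓ]; ring
    have hd2 : q ^ (((N:ℕ):ℤ) + ((m:ℕ):ℤ) - (μ ℓ:ℤ) + (((ℓ:ℕ):ℤ) + 1) + ((k:ℕ):ℤ) - 1)
        = b ℓ * X := by
      rw [hbdef ℓ, hXdef, ← zpow_add₀ hq]; congr 1; rw [hBdef ℓ]; ring
    have hd3 : q ^ ((n:ℤ) + 1 - (((ℓ:ℕ):ℤ) + 1) + (μ ℓ:ℤ)) = Fq / b ℓ := by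
      rw [hFqdef, hbdef ℓ, ← zpow_sub₀ hq]; congr 1; rw [hBdef ℓ]; ring
    have hprod : (∏ j ∈ Finset.univ.erase ℓ,
          (1 - q ^ (2 * (n : ℤ) + 2 - (((j : ℕ) : ℤ) + 1)
              - (((ℓ : ℕ) : ℤ) + 1) + (μ j : ℤ) + (μ ℓ : ℤ)))
            / (1 - q ^ ((μ ℓ : ℤ) - (μ j : ℤ) + ((j : ℕ) : ℤ) - ((ℓ : ℕ) : ℤ))))
        = P ℓ := by
      rw [hPdef ℓ]
      apply Finset.prod_congr rfl
      intro j hj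
      have en : q ^ (2 * (n:ℤ) + 2 - (((j:ℕ):ℤ) + 1) - (((ℓ:ℕ):ℤ) + 1) + (μ j:ℤ) + (μ ℓ:ℤ))
          = aa j / b ℓ := by
        rw [haadef j, hbdef ℓ, ← zpow_sub₀ hq]; congr 1; rw [hAdef j, hBdef ℓ]; ring
      have ed : q ^ ((μ ℓ:ℤ) - (μ j:ℤ) + ((j:ℕ):ℤ) - ((ℓ:ℕ):ℤ)) = b j / b ℓ := by
        rw [hbdef j, hbdef ℓ, ← zpow_sub₀ hq]; congr 1; rw [hBdef j, hBdef ℓ]; ring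
      rw [en, ed]
    have hpre : q ^ (-((N:ℕ):ℤ) - ((m:ℕ):ℤ)) * q ^ ((μ ℓ:ℤ) - (((ℓ:ℕ):ℤ) + 1) + 1)
        = (b ℓ)⁻¹ := by
      rw [hbdef ℓ, ← zpow_add₀ hq, ← zpow_neg]; congr 1; rw [hBdef ℓ]; ring
    rw [hd1, hd2, hd3, hprod, hwdef ℓ]
    linear_combination (((1 - b ℓ)/(1 - b ℓ * X)) * (1 - Fq / b ℓ) * P ℓ) * hpre
  have hsump : q ^ (-((N:ℕ):ℤ) - ((m:ℕ):ℤ)) *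
      ∑ ℓ : Fin n,
        (q ^ ((μ ℓ : ℤ) - (((ℓ : ℕ) : ℤ) + 1) + 1)
          * ((1 - q ^ (((N:ℕ) : ℤ) + ((m:ℕ) : ℤ) - (μ ℓ : ℤ) + (((ℓ : ℕ) : ℤ) + 1) - 1))
            / (1 - q ^ (((N:ℕ) : ℤ) + ((m:ℕ) : ℤ) - (μ ℓ : ℤ) + (((ℓ : ℕ) : ℤ) + 1)
                + ((k:ℕ) : ℤ) - 1)))
          * (1 - q ^ ((n : ℤ) + 1 - (((ℓ : ℕ) : ℤ) + 1) + (μ ℓ : ℤ)))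
          * ∏ j ∈ Finset.univ.erase ℓ,
              (1 - q ^ (2 * (n : ℤ) + 2 - (((j : ℕ) : ℤ) + 1)
                  - (((ℓ : ℕ) : ℤ) + 1) + (μ j : ℤ) + (μ ℓ : ℤ)))
                / (1 - q ^ ((μ ℓ : ℤ) - (μ j : ℤ) + ((j : ℕ) : ℤ) - ((ℓ : ℕ) : ℤ))))
      = ∑ ℓ : Fin n, (1 - b ℓ) * w ℓ / (1 - b ℓ * X) := by
    rw [Finset.mul_sum]
    exact Finset.sum_congr rfl hterm
  rw [Finset.prod_congr rfl hL, hhead1, hhead2, hqk, hmain]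
  congr 1
  rw [← hsump]
  ring
end
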